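/- arXiv:1107.2639 — 4 statements merged into one kernel-verified Lean document; each statement's English description precedes it below -/
import Mathlib

section
/- Let P be a partial latin square of order n whose filled cells are those in the upper-left r×s rectangle except for t empty cells inside the rectangle, with at most one such empty cell in each column. Then P is completable to a latin square of order n if and only if P satisfies Hall's Condition. -/
open scoped Classical

section PLS

variable {n : ℕ}

/-- A partial latin square of order `n`: an `n × n` array of optional symbols,
no symbol occurring twice in any row or column. -/
def IsPLS (n : ℕ) (P : Fin n → Fin n → Option (Fin n)) : Prop :=
  (∀ i j j' σ, P i j = some σ → P i j' = some σ → j = j') ∧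
  (∀ i i' j σ, P i j = some σ → P i' j = some σ → i = i')

/-- `σ` is missing from row `i`. -/
def MissingRow (P : Fin n → Fin n → Option (Fin n)) (σ i : Fin n) : Prop :=
  ∀ j, P i j ≠ some σ

/-- `σ` is missing from column `j`. -/
def MissingCol (P : Fin n → Fin n → Option (Fin n)) (σ j : Fin n) : Prop :=
  ∀ i, P i j ≠ some σ

/-- A cell supports `σ` if it contains `σ`, or is empty and `σ` is missing from
its row and column. -/
def Supports (P : Fin n → Fin n → Option (Fin n)) (σ : Fin n) (c : Fin n × Fin n) : Prop :=
  P c.1 c.2 = some σ ∨ (P c.1 c.2 = none ∧ MissingRow P σ c.1 ∧ MissingCol P σ c.2)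

/-- A set of cells is independent if no two share a row or a column. -/
def IndepCells (S : Finset (Fin n × Fin n)) : Prop :=
  ∀ c ∈ S, ∀ c' ∈ S, c ≠ c' → c.1 ≠ c'.1 ∧ c.2 ≠ c'.2

/-- `alpha P σ T` : max size of an independent subset of `T` all of whose cells support `σ`. -/
noncomputable def alpha (P : Fin n → Fin n → Option (Fin n)) (σ : Fin n)
    (T : Finset (Fin n × Fin n)) : ℕ :=
  (T.powerset.filter (fun S => IndepCells S ∧ ∀ c ∈ S, Supports P σ c)).sup Finset.card

/-- Hall's Condition: every set of cells satisfies the Hall Inequality. -/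
def HallCond (n : ℕ) (P : Fin n → Fin n → Option (Fin n)) : Prop :=
  ∀ T : Finset (Fin n × Fin n), T.card ≤ ∑ σ : Fin n, alpha P σ T

/-- A latin square of order `n`. -/
def IsLatin (n : ℕ) (L : Fin n → Fin n → Fin n) : Prop :=
  (∀ i, Function.Injective (L i)) ∧ (∀ j, Function.Injective fun i => L i j)

/-- `L` is a completion of `P`. -/
def Completes (n : ℕ) (P : Fin n → Fin n → Option (Fin n)) (L : Fin n → Fin n → Fin n) : Prop :=
  IsLatin n L ∧ ∀ i j σ, P i j = some σ → L i j = σ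

end PLS

section Aux

open Finset

variable {n : ℕ}

/-- rows in which symbol `σ` occurs. -/
noncomputable def rowsWith (n : ℕ) (Q : Fin n → Fin n → Option (Fin n)) (σ : Fin n) :
    Finset (Fin n) := Finset.univ.filter fun i => ∃ j, Q i j = some σ

/-- `Q` is filled exactly on the `r × s` rectangle. -/
def IsFull (n r s : ℕ) (Q : Fin n → Fin n → Option (Fin n)) : Prop :=
  ∀ i j : Fin n, Q i j ≠ none ↔ (i.val < r ∧ j.val < s)

lemma card_filter_val_lt (n m : ℕ) (h : m ≤ n) :
    ((Finset.univ : Finset (Fin n)).filter fun i => i.val < m).card = m := by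
  rw [← Finset.card_range m]
  apply Finset.card_bij (fun (a : Fin n) _ => a.val)
  · intro a ha; simp only [Finset.mem_filter] at ha; simpa using ha.2
  · intro a _ b _ hab; exact Fin.ext hab
  · intro b hb
    simp only [Finset.mem_range] at hb
    exact ⟨⟨b, lt_of_lt_of_le hb h⟩, by simp [hb], rfl⟩

/-- generic double counting Hall-type bound -/
lemma card_le_card_biUnion_of_deg {ι β : Type*} [DecidableEq ι] [DecidableEq β]
    (S : Finset ι) (A : ι → Finset β) (d : ℕ) (hd : 0 < d)
    (hlow : ∀ i ∈ S, d ≤ (A i).card)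
    (hup : ∀ b : β, (S.filter fun i => b ∈ A i).card ≤ d) :
    S.card ≤ (S.biUnion A).card := by
  classical
  set B := S.biUnion A with hB
  set Pairs := (S ×ˢ B).filter (fun p : ι × β => p.2 ∈ A p.1) with hPairs
  have h1 : Pairs.card = ∑ i ∈ S, (A i).card := by
    rw [Finset.card_eq_sum_card_fiberwise (f := Prod.fst) (t := S) (by
      intro p hp; simp only [hPairs, Finset.mem_coe, Finset.mem_filter, Finset.mem_product] at hp
      exact hp.1.1)]
    refine Finset.sum_congr rfl fun i hi => ?_
    have heq : Pairs.filter (fun p => p.1 = i) = {i} ×ˢ A i := by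
      ext p
      simp only [hPairs, Finset.mem_filter, Finset.mem_product, Finset.mem_singleton, hB,
        Finset.mem_biUnion]
      constructor
      · rintro ⟨⟨⟨hpS, hpB⟩, hpA⟩, h1⟩; exact ⟨h1, by rwa [h1] at hpA⟩
      · rintro ⟨h1, h2⟩
        refine ⟨⟨⟨by rwa [h1], ⟨i, hi, h2⟩⟩, by rw [h1]; exact h2⟩, h1⟩
    rw [heq, Finset.card_product, Finset.card_singleton, one_mul]
  have h2 : Pairs.card = ∑ b ∈ B, (S.filter fun i => b ∈ A i).card := by
    rw [Finset.card_eq_sum_card_fiberwise (f := Prod.snd) (t := B) (by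
      intro p hp; simp only [hPairs, Finset.mem_coe, Finset.mem_filter, Finset.mem_product] at hp
      exact hp.1.2)]
    refine Finset.sum_congr rfl fun b hb => ?_
    have heq : Pairs.filter (fun p => p.2 = b) = (S.filter fun i => b ∈ A i) ×ˢ {b} := by
      ext p
      simp only [hPairs, Finset.mem_filter, Finset.mem_product, Finset.mem_singleton]
      constructor
      · rintro ⟨⟨⟨hpS, hpB⟩, hpA⟩, h1⟩; exact ⟨⟨hpS, by rwa [h1] at hpA⟩, h1⟩
      · rintro ⟨⟨h1, h2⟩, h3⟩
        refine ⟨⟨⟨h1, ?_⟩, by rwa [h3]⟩, h3⟩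
        rw [hB, Finset.mem_biUnion]; exact ⟨p.1, h1, by rwa [h3]⟩
    rw [heq, Finset.card_product, Finset.card_singleton, mul_one]
  have hle : S.card * d ≤ B.card * d := by
    calc S.card * d = ∑ _i ∈ S, d := by rw [Finset.sum_const, smul_eq_mul]
    _ ≤ ∑ i ∈ S, (A i).card := Finset.sum_le_sum hlow
    _ = ∑ b ∈ B, (S.filter fun i => b ∈ A i).card := by rw [← h1, h2]
    _ ≤ ∑ _b ∈ B, d := Finset.sum_le_sum (fun b _ => hup b)
    _ = B.card * d := by rw [Finset.sum_const, smul_eq_mul]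
  exact Nat.le_of_mul_le_mul_right hle hd

lemma easy_direction {n : ℕ} (P : Fin n → Fin n → Option (Fin n)) (L : Fin n → Fin n → Fin n)
    (hL : Completes n P L) : HallCond n P := by
  classical
  obtain ⟨⟨hrow, hcol⟩, hext⟩ := hL
  intro T
  have hT : T.card = ∑ σ : Fin n, (T.filter fun c => L c.1 c.2 = σ).card :=
    Finset.card_eq_sum_card_fiberwise (fun c _ => Finset.mem_univ _)
  rw [hT]
  refine Finset.sum_le_sum fun σ _ => ?_
  refine Finset.le_sup (f := Finset.card) ?_
  rw [Finset.mem_filter, Finset.mem_powerset]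
  refine ⟨Finset.filter_subset _ _, ?_, ?_⟩
  · intro c hc c' hc' hne
    rw [Finset.mem_filter] at hc hc'
    constructor
    · intro h1
      apply hne
      have h2 : L c.1 c.2 = L c'.1 c'.2 := by rw [hc.2, hc'.2]
      rw [← h1] at h2
      have := hrow c.1 h2
      exact Prod.ext h1 this
    · intro h2
      apply hne
      have h1 : L c.1 c.2 = L c'.1 c'.2 := by rw [hc.2, hc'.2]
      rw [← h2] at h1
      have := hcol c.2 h1
      exact Prod.ext this h2
  · intro c hc
    rw [Finset.mem_filter] at hc
    rcases h : P c.1 c.2 with _ | τ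
    · right
      refine ⟨h, ?_, ?_⟩
      · intro j hj
        have h1 : L c.1 j = σ := hext _ _ _ hj
        rw [← hc.2] at h1
        have := hrow c.1 h1
        rw [← this] at h
        rw [h] at hj
        exact nomatch hj
      · intro i hi
        have h1 : L i c.2 = σ := hext _ _ _ hi
        rw [← hc.2] at h1
        have := hcol c.2 h1
        rw [← this] at h
        rw [h] at hi
        exact nomatch hi
    · left
      rw [h]
      have := hext _ _ _ h
      rw [hc.2] at this
      rw [this]

lemma card_filter_not_val_lt (n m : ℕ) (h : m ≤ n) :
    ((Finset.univ : Finset (Fin n)).filter fun i => ¬ i.val < m).card = n - m := by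
  rw [Finset.filter_not, Finset.card_sdiff_of_subset (Finset.filter_subset _ _), Finset.card_univ,
    Fintype.card_fin, card_filter_val_lt n m h]

lemma row_symbols_card {n : ℕ} {Q : Fin n → Fin n → Option (Fin n)} (hQ : IsPLS n Q) {r s : ℕ}
    (hfull : IsFull n r s Q) (hn : 0 < n) (hsn : s ≤ n) (i : Fin n) (hi : i.val < r) :
    ((Finset.univ : Finset (Fin n)).filter fun σ => ∃ j, Q i j = some σ).card = s := by
  haveI : Inhabited (Fin n) := ⟨⟨0, hn⟩⟩
  rw [← card_filter_val_lt n s hsn]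
  symm
  apply Finset.card_bij (fun (j : Fin n) _ => (Q i j).iget)
  · intro j hj
    rw [Finset.mem_filter] at hj
    have h1 : Q i j ≠ none := (hfull i j).mpr ⟨hi, hj.2⟩
    rcases h : Q i j with _ | a
    · exact absurd h h1
    · simp only [Finset.mem_filter, Finset.mem_univ, true_and]
      exact ⟨j, by simp [h]⟩
  · intro j hj j' hj' heq
    rw [Finset.mem_filter] at hj hj'
    have h1 : Q i j ≠ none := (hfull i j).mpr ⟨hi, hj.2⟩
    have h2 : Q i j' ≠ none := (hfull i j').mpr ⟨hi, hj'.2⟩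
    rcases h : Q i j with _ | a
    · exact absurd h h1
    rcases h' : Q i j' with _ | a'
    · exact absurd h' h2
    rw [h, h'] at heq
    change a = a' at heq
    exact hQ.1 i j j' a h (by rw [h', heq])
  · intro σ hσ
    rw [Finset.mem_filter] at hσ
    obtain ⟨j, hj⟩ := hσ.2
    have hjs : j.val < s := ((hfull i j).mp (by simp [hj])).2
    exact ⟨j, by simp [Finset.mem_filter, hjs], by simp [hj]⟩

lemma missing_row_card {n : ℕ} {Q : Fin n → Fin n → Option (Fin n)} (hQ : IsPLS n Q) {r s : ℕ}
    (hfull : IsFull n r s Q) (hn : 0 < n) (hsn : s ≤ n) (i : Fin n) (hi : i.val < r) :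
    ((Finset.univ : Finset (Fin n)).filter fun σ => ∀ j, Q i j ≠ some σ).card = n - s := by
  have heq : ((Finset.univ : Finset (Fin n)).filter fun σ => ∀ j, Q i j ≠ some σ) =
      Finset.univ.filter fun σ => ¬ ∃ j, Q i j = some σ := by
    apply Finset.filter_congr
    intro σ _
    push_neg
    rfl
  rw [heq, Finset.filter_not, Finset.card_sdiff_of_subset (Finset.filter_subset _ _), Finset.card_univ,
    Fintype.card_fin, row_symbols_card hQ hfull hn hsn i hi]

lemma rowsWith_subset {n : ℕ} {Q : Fin n → Fin n → Option (Fin n)} {r s : ℕ}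
    (hfull : IsFull n r s Q) (σ : Fin n) :
    rowsWith n Q σ ⊆ Finset.univ.filter fun i : Fin n => i.val < r := by
  intro i hi
  rw [rowsWith, Finset.mem_filter] at hi
  obtain ⟨j, hj⟩ := hi.2
  simp only [Finset.mem_filter, Finset.mem_univ, true_and]
  exact ((hfull i j).mp (by simp [hj])).1

lemma missing_rows_card {n : ℕ} {Q : Fin n → Fin n → Option (Fin n)} {r s : ℕ} (hrn : r ≤ n)
    (hfull : IsFull n r s Q) (σ : Fin n) :
    ((Finset.univ.filter fun i : Fin n => i.val < r).filter fun i => ∀ j, Q i j ≠ some σ).card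
      = r - (rowsWith n Q σ).card := by
  have heq : ((Finset.univ.filter fun i : Fin n => i.val < r).filter fun i => ∀ j, Q i j ≠ some σ)
      = (Finset.univ.filter fun i : Fin n => i.val < r) \ rowsWith n Q σ := by
    ext i
    simp only [Finset.mem_filter, Finset.mem_sdiff, rowsWith, Finset.mem_univ, true_and]
    constructor
    · rintro ⟨h1, h2⟩
      refine ⟨h1, ?_⟩
      rintro ⟨j, hj⟩
      exact h2 j hj
    · rintro ⟨h1, h2⟩
      refine ⟨h1, fun j hj => h2 ⟨j, hj⟩⟩
  rw [heq, Finset.card_sdiff_of_subset (rowsWith_subset hfull σ), card_filter_val_lt n r hrn]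

lemma extend_col {n r s : ℕ} (hn : 0 < n) (hrn : r ≤ n) (hsn : s < n)
    {Q : Fin n → Fin n → Option (Fin n)} (hQ : IsPLS n Q) (hfull : IsFull n r s Q)
    (hcount : ∀ σ, r + s ≤ n + (rowsWith n Q σ).card) :
    ∃ Q', IsPLS n Q' ∧ IsFull n r (s+1) Q' ∧ (∀ i j, Q i j ≠ none → Q' i j = Q i j) ∧
      (∀ σ, r + (s+1) ≤ n + (rowsWith n Q' σ).card) := by
  classical
  set N : Fin n → ℕ := fun σ => (rowsWith n Q σ).card with hN
  set A : Fin n → Finset (Fin n) := fun i =>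
    if i.val < r then Finset.univ.filter (fun σ => ∀ j, Q i j ≠ some σ)
    else Finset.univ.filter (fun σ => r + s + 1 ≤ n + N σ) with hA
  have hhall : ∀ S : Finset (Fin n), S.card ≤ (S.biUnion A).card := by
    intro S
    by_cases hS : ∀ i ∈ S, i.val < r
    · apply card_le_card_biUnion_of_deg S A (n - s) (by omega)
      · intro i hi
        rw [hA]
        simp only [if_pos (hS i hi)]
        rw [missing_row_card hQ hfull hn (le_of_lt hsn) i (hS i hi)]
      · intro σ
        have hsub : (S.filter fun i => σ ∈ A i) ⊆
            ((Finset.univ.filter fun i : Fin n => i.val < r).filter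
              fun i => ∀ j, Q i j ≠ some σ) := by
          intro i hi
          rw [Finset.mem_filter] at hi
          have hir := hS i hi.1
          have hi2 := hi.2
          rw [hA] at hi2
          simp only [if_pos hir, Finset.mem_filter, Finset.mem_univ, true_and] at hi2
          simp only [Finset.mem_filter, Finset.mem_univ, true_and]
          exact ⟨hir, hi2⟩
        calc (S.filter fun i => σ ∈ A i).card
            ≤ _ := Finset.card_le_card hsub
          _ = r - N σ := missing_rows_card hrn hfull σ
          _ ≤ n - s := by
              have := hcount σ
              have hNr : N σ = (rowsWith n Q σ).card := rfl
              omega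
    · push_neg at hS
      obtain ⟨i0, hi0S, hi0r⟩ := hS
      set S1 := S.filter (fun i => i.val < r) with hS1
      set crit := Finset.univ.filter (fun σ : Fin n => ¬ (r + s + 1 ≤ n + N σ)) with hcrit
      set X := crit \ (S1.biUnion A) with hX
      have hXcard : X.card ≤ r - S1.card := by
        set B : Fin n → Finset (Fin n) := fun σ =>
          Finset.univ.filter (fun i : Fin n => i.val < r ∧ ∀ j, Q i j ≠ some σ) with hB
      -- every element of B σ for σ ∈ X avoids S1
        have hBS1 : ∀ σ ∈ X, ∀ i ∈ B σ, i ∉ S1 := by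
          intro σ hσ i hi hiS1
          rw [hX, Finset.mem_sdiff] at hσ
          apply hσ.2
          rw [Finset.mem_biUnion]
          refine ⟨i, hiS1, ?_⟩
          rw [hS1, Finset.mem_filter] at hiS1
          rw [hB, Finset.mem_filter] at hi
          rw [hA]
          simp only [if_pos hiS1.2, Finset.mem_filter, Finset.mem_univ, true_and]
          exact hi.2.2
        have h1 : X.card ≤ (X.biUnion B).card := by
          apply card_le_card_biUnion_of_deg X B (n - s) (by omega)
          · intro σ hσ
            have hσc : σ ∈ crit := (Finset.mem_sdiff.mp hσ).1
            rw [hcrit, Finset.mem_filter] at hσc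
            have hc2 := hσc.2
            have hc3 := hcount σ
            have hBeq : (B σ).card = r - N σ := by
              simp only [hB]
              have : (Finset.univ.filter fun i : Fin n => i.val < r ∧ ∀ j, Q i j ≠ some σ)
                  = ((Finset.univ.filter fun i : Fin n => i.val < r).filter
                      fun i => ∀ j, Q i j ≠ some σ) := by
                rw [Finset.filter_filter]
              rw [this, missing_rows_card hrn hfull σ]
            rw [hBeq]
            have hNr : N σ = (rowsWith n Q σ).card := rfl
            omega
          · intro b
            by_cases hbr : b.val < r
            · have hsub : (X.filter fun σ => b ∈ B σ) ⊆
                  (Finset.univ.filter fun σ => ∀ j, Q b j ≠ some σ) := by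
                intro σ hσ
                rw [Finset.mem_filter] at hσ
                have := hσ.2
                rw [hB, Finset.mem_filter] at this
                simp only [Finset.mem_filter, Finset.mem_univ, true_and]
                exact this.2.2
              calc (X.filter fun σ => b ∈ B σ).card ≤ _ := Finset.card_le_card hsub
                _ = n - s := missing_row_card hQ hfull hn (le_of_lt hsn) b hbr
            · have : (X.filter fun σ => b ∈ B σ) = ∅ := by
                apply Finset.filter_false_of_mem
                intro σ _
                rw [hB, Finset.mem_filter]
                push_neg
                intro _ h
                exact absurd h hbr
              rw [this]
              simp
        have h2 : (X.biUnion B) ⊆ (Finset.univ.filter fun i : Fin n => i.val < r) \ S1 := by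
          intro i hi
          rw [Finset.mem_biUnion] at hi
          obtain ⟨σ, hσ, hiB⟩ := hi
          rw [Finset.mem_sdiff]
          constructor
          · rw [hB, Finset.mem_filter] at hiB
            simp only [Finset.mem_filter, Finset.mem_univ, true_and]
            exact hiB.2.1
          · exact hBS1 σ hσ i hiB
        have h3 := Finset.card_le_card h2
        have hsub3 : S1 ⊆ Finset.univ.filter fun i : Fin n => i.val < r := by
          intro i hi
          rw [hS1, Finset.mem_filter] at hi
          simp only [Finset.mem_filter, Finset.mem_univ, true_and]
          exact hi.2
        have h4 : ((Finset.univ.filter fun i : Fin n => i.val < r) \ S1).card = r - S1.card := by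
          rw [Finset.card_sdiff_of_subset hsub3, card_filter_val_lt n r hrn]
        omega
      -- assemble
      have hScard : S.card = S1.card + (S.filter fun i => ¬ i.val < r).card := by
        rw [hS1]
        exact (Finset.card_filter_add_card_filter_not _).symm
      have hS2 : (S.filter fun i => ¬ i.val < r).card ≤ n - r := by
        calc (S.filter fun i => ¬ i.val < r).card
            ≤ (Finset.univ.filter fun i : Fin n => ¬ i.val < r).card :=
              Finset.card_le_card (fun i hi => by
                rw [Finset.mem_filter] at hi ⊢; exact ⟨Finset.mem_univ _, hi.2⟩)
          _ = n - r := card_filter_not_val_lt n r hrn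
      have hncrit : (Finset.univ.filter fun σ : Fin n => r + s + 1 ≤ n + N σ) ⊆ S.biUnion A := by
        intro σ hσ
        rw [Finset.mem_biUnion]
        refine ⟨i0, hi0S, ?_⟩
        simp only [hA]
        rw [if_neg (by omega : ¬ (i0.val < r))]
        exact hσ
      have hS1bi : S1.biUnion A ⊆ S.biUnion A :=
        Finset.biUnion_subset_biUnion_of_subset_left _ (Finset.filter_subset _ _)
      have hunion : (Finset.univ.filter fun σ : Fin n => r + s + 1 ≤ n + N σ) ∪ (crit \ X)
          ⊆ S.biUnion A := by
        apply Finset.union_subset hncrit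
        intro σ hσ
        rw [hX, Finset.mem_sdiff] at hσ
        obtain ⟨hσc, hσn⟩ := hσ
        rw [Finset.mem_sdiff] at hσn
        push_neg at hσn
        exact hS1bi (hσn hσc)
      have hdisj : Disjoint (Finset.univ.filter fun σ : Fin n => r + s + 1 ≤ n + N σ)
          (crit \ X) := by
        rw [Finset.disjoint_left]
        intro σ hσ hσ'
        have := (Finset.mem_sdiff.mp hσ').1
        rw [hcrit, Finset.mem_filter] at this
        rw [Finset.mem_filter] at hσ
        exact this.2 hσ.2
      have hcards : (Finset.univ.filter fun σ : Fin n => r + s + 1 ≤ n + N σ).card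
          + crit.card = n := by
        rw [hcrit, Finset.filter_not, Finset.card_sdiff_of_subset (Finset.filter_subset _ _),
          Finset.card_univ, Fintype.card_fin]
        have := Finset.card_le_card
          (Finset.filter_subset (fun σ : Fin n => r + s + 1 ≤ n + N σ) Finset.univ)
        rw [Finset.card_univ, Fintype.card_fin] at this
        omega
      have hXsub : X ⊆ crit := Finset.sdiff_subset
      have hfin : (Finset.univ.filter fun σ : Fin n => r + s + 1 ≤ n + N σ).card
          + (crit.card - X.card) ≤ (S.biUnion A).card := by
        calc _ = ((Finset.univ.filter fun σ : Fin n => r + s + 1 ≤ n + N σ) ∪ (crit \ X)).card := by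
              rw [Finset.card_union_of_disjoint hdisj, Finset.card_sdiff_of_subset hXsub]
          _ ≤ _ := Finset.card_le_card hunion
      have hS1r : S1.card ≤ r := by
        have := Finset.card_le_card (show S1 ⊆ Finset.univ.filter fun i : Fin n => i.val < r by
          rw [hS1]; intro i hi; rw [Finset.mem_filter] at hi ⊢; exact ⟨Finset.mem_univ _, hi.2⟩)
        rwa [card_filter_val_lt n r hrn] at this
      have hXc := Finset.card_le_card hXsub
      omega
  obtain ⟨F, hFinj, hFmem⟩ := (Finset.all_card_le_biUnion_card_iff_exists_injective A).mp hhall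
  set Q' : Fin n → Fin n → Option (Fin n) := fun i j =>
    if i.val < r ∧ j.val = s then some (F i) else Q i j with hQ'
  have hext : ∀ i j, Q i j ≠ none → Q' i j = Q i j := by
    intro i j h
    rw [hQ']
    simp only
    rw [if_neg]
    rintro ⟨h1, h2⟩
    have := ((hfull i j).mp h).2
    omega
  have hFmiss : ∀ i : Fin n, i.val < r → ∀ j, Q i j ≠ some (F i) := by
    intro i hir
    have := hFmem i
    rw [hA] at this
    simp only [if_pos hir, Finset.mem_filter, Finset.mem_univ, true_and] at this
    exact this
  have hFnc : ∀ i : Fin n, ¬ i.val < r → r + s + 1 ≤ n + N (F i) := by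
    intro i hir
    have := hFmem i
    rw [hA] at this
    simp only [if_neg hir, Finset.mem_filter, Finset.mem_univ, true_and] at this
    exact this
  refine ⟨Q', ⟨?_, ?_⟩, ?_, hext, ?_⟩
  · -- rows
    intro i j j' σ h1 h2
    rw [hQ'] at h1 h2
    simp only at h1 h2
    by_cases c1 : i.val < r ∧ j.val = s
    · rw [if_pos c1] at h1
      by_cases c2 : i.val < r ∧ j'.val = s
      · rw [if_pos c2] at h2
        exact Fin.ext (c1.2.trans c2.2.symm)
      · rw [if_neg c2] at h2
        exfalso
        apply hFmiss i c1.1 j'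
        rw [h2]
        rw [← Option.some_inj.mp h1]
    · rw [if_neg c1] at h1
      by_cases c2 : i.val < r ∧ j'.val = s
      · rw [if_pos c2] at h2
        exfalso
        apply hFmiss i c2.1 j
        rw [h1, ← Option.some_inj.mp h2]
      · rw [if_neg c2] at h2
        exact hQ.1 i j j' σ h1 h2
  · -- cols
    intro i i' j σ h1 h2
    rw [hQ'] at h1 h2
    simp only at h1 h2
    by_cases c1 : i.val < r ∧ j.val = s
    · rw [if_pos c1] at h1
      by_cases c2 : i'.val < r ∧ j.val = s
      · rw [if_pos c2] at h2
        apply hFinj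
        rw [Option.some_inj.mp h1, Option.some_inj.mp h2]
      · exfalso
        rw [if_neg c2] at h2
        have := ((hfull i' j).mp (by simp [h2])).2
        omega
    · rw [if_neg c1] at h1
      by_cases c2 : i'.val < r ∧ j.val = s
      · exfalso
        rw [if_pos c2] at h2
        have := ((hfull i j).mp (by simp [h1])).2
        omega
      · rw [if_neg c2] at h2
        exact hQ.2 i i' j σ h1 h2
  · -- full
    intro i j
    rw [hQ']
    simp only
    by_cases c : i.val < r ∧ j.val = s
    · rw [if_pos c]
      constructor
      · intro _
        exact ⟨c.1, by omega⟩
      · intro _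
        simp
    · rw [if_neg c]
      rw [hfull i j]
      constructor
      · rintro ⟨h1, h2⟩
        exact ⟨h1, by omega⟩
      · rintro ⟨h1, h2⟩
        refine ⟨h1, ?_⟩
        rcases Nat.lt_or_ge j.val s with h | h
        · exact h
        · exfalso
          exact c ⟨h1, by omega⟩
  · -- counts
    intro σ
    have hb : Function.Bijective F := (Finite.injective_iff_bijective).mp hFinj
    obtain ⟨i0, hi0⟩ := hb.2 σ
    have hsub : rowsWith n Q σ ⊆ rowsWith n Q' σ := by
      intro i hi
      rw [rowsWith, Finset.mem_filter] at hi ⊢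
      obtain ⟨j, hj⟩ := hi.2
      exact ⟨Finset.mem_univ _, j, by rw [hext i j (by simp [hj])]; exact hj⟩
    by_cases hir : i0.val < r
    · have hnew : i0 ∈ rowsWith n Q' σ := by
        rw [rowsWith, Finset.mem_filter]
        refine ⟨Finset.mem_univ _, ⟨s, hsn⟩, ?_⟩
        have heq : Q' i0 ⟨s, hsn⟩ = some (F i0) := if_pos ⟨hir, rfl⟩
        rw [heq, hi0]
      have hold : i0 ∉ rowsWith n Q σ := by
        rw [rowsWith, Finset.mem_filter]
        push_neg
        intro _ j
        rw [← hi0]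
        exact hFmiss i0 hir j
      have hsub2 : insert i0 (rowsWith n Q σ) ⊆ rowsWith n Q' σ :=
        Finset.insert_subset hnew hsub
      have := Finset.card_le_card hsub2
      rw [Finset.card_insert_of_notMem hold] at this
      have hc := hcount σ
      omega
    · have := hFnc i0 hir
      rw [hi0] at this
      have h2 := Finset.card_le_card hsub
      have hNr : N σ = (rowsWith n Q σ).card := rfl
      omega


lemma extend_to_n {n r : ℕ} (hn : 0 < n) (hrn : r ≤ n) :
    ∀ m s, s + m = n → ∀ Q : Fin n → Fin n → Option (Fin n), IsPLS n Q → IsFull n r s Q →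
      (∀ σ, r + s ≤ n + (rowsWith n Q σ).card) →
      ∃ Q', IsPLS n Q' ∧ IsFull n r n Q' ∧ (∀ i j, Q i j ≠ none → Q' i j = Q i j) := by
  intro m
  induction m with
  | zero =>
    intro s hs Q hQ hfull _
    have hsn : s = n := by omega
    subst hsn
    exact ⟨Q, hQ, hfull, fun i j _ => rfl⟩
  | succ m ih =>
    intro s hs Q hQ hfull hcount
    have hsn : s < n := by omega
    obtain ⟨Q', h1, h2, h3, h4⟩ := extend_col hn hrn hsn hQ hfull hcount
    obtain ⟨Q'', g1, g2, g3⟩ := ih (s+1) (by omega) Q' h1 h2 h4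
    refine ⟨Q'', g1, g2, fun i j h => ?_⟩
    rw [g3 i j (by rw [h3 i j h]; exact h), h3 i j h]

lemma transpose_stuff {n r : ℕ} (hn : 0 < n) (hrn : r ≤ n)
    {Q : Fin n → Fin n → Option (Fin n)} (hQ : IsPLS n Q) (hfull : IsFull n r n Q) :
    IsPLS n (fun i j => Q j i) ∧ IsFull n n r (fun i j => Q j i) ∧
      (∀ σ, n + r ≤ n + (rowsWith n (fun i j => Q j i) σ).card) := by
  classical
  refine ⟨⟨fun i j j' σ h1 h2 => hQ.2 j j' i σ h1 h2,
    fun i i' j σ h1 h2 => hQ.1 j i i' σ h1 h2⟩, ?_, ?_⟩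
  · intro i j
    rw [hfull j i]
    constructor
    · rintro ⟨h1, h2⟩; exact ⟨h2, h1⟩
    · rintro ⟨h1, h2⟩; exact ⟨h2, h1⟩
  · intro σ
    have hall : ∀ i : Fin n, i.val < r → ∃ j, Q i j = some σ := by
      intro i hi
      have hcard := row_symbols_card hQ hfull hn le_rfl i hi
      have huniv : (Finset.univ.filter fun τ => ∃ j, Q i j = some τ) = Finset.univ := by
        apply Finset.eq_univ_of_card
        rw [hcard, Fintype.card_fin]
      have hmem : σ ∈ Finset.univ.filter fun τ => ∃ j, Q i j = some τ := by
        rw [huniv]; exact Finset.mem_univ σ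
      rw [Finset.mem_filter] at hmem
      exact hmem.2
    set f : Fin n → Fin n := fun i =>
      if h : i.val < r then Classical.choose (hall i h) else i with hf
    have hfspec : ∀ i (h : i.val < r), Q i (f i) = some σ := by
      intro i h
      rw [hf]
      simp only [dif_pos h]
      exact Classical.choose_spec (hall i h)
    have hmap : ∀ i ∈ Finset.univ.filter fun i : Fin n => i.val < r,
        f i ∈ rowsWith n (fun i j => Q j i) σ := by
      intro i hi
      rw [Finset.mem_filter] at hi
      rw [rowsWith, Finset.mem_filter]
      exact ⟨Finset.mem_univ _, i, hfspec i hi.2⟩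
    have hinj : Set.InjOn f (Finset.univ.filter fun i : Fin n => i.val < r) := by
      intro i hi i' hi' heq
      rw [Finset.coe_filter] at hi hi'
      simp only [Set.mem_setOf_eq] at hi hi'
      have e1 := hfspec i hi.2
      have e2 := hfspec i' hi'.2
      rw [heq] at e1
      exact hQ.2 i i' (f i') σ e1 e2
    have := Finset.card_le_card_of_injOn f hmap hinj
    rw [card_filter_val_lt n r hrn] at this
    omega

lemma full_to_latin {n : ℕ} (hn : 0 < n) {Q : Fin n → Fin n → Option (Fin n)}
    (hQ : IsPLS n Q) (hfull : IsFull n n n Q) :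
    ∃ L : Fin n → Fin n → Fin n, IsLatin n L ∧ ∀ i j σ, Q i j = some σ → L i j = σ := by
  haveI : Inhabited (Fin n) := ⟨⟨0, hn⟩⟩
  have hsome : ∀ i j, Q i j = some ((Q i j).iget) := by
    intro i j
    have h1 : Q i j ≠ none := (hfull i j).mpr ⟨i.2, j.2⟩
    rcases h : Q i j with _ | a
    · exact absurd h h1
    · simp
  refine ⟨fun i j => (Q i j).iget, ⟨?_, ?_⟩, ?_⟩
  · intro i j j' h
    simp only at h
    exact hQ.1 i j j' _ (hsome i j) (by rw [h]; exact hsome i j')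
  · intro j i i' h
    simp only at h
    exact hQ.2 i i' j _ (hsome i j) (by rw [h]; exact hsome i' j)
  · intro i j σ h
    simp [h]

lemma complete_full_rect {n r s : ℕ} (hn : 0 < n) (hrn : r ≤ n) (hsn : s ≤ n)
    {Q : Fin n → Fin n → Option (Fin n)} (hQ : IsPLS n Q) (hfull : IsFull n r s Q)
    (hcount : ∀ σ, r + s ≤ n + (rowsWith n Q σ).card) :
    ∃ L : Fin n → Fin n → Fin n, IsLatin n L ∧ ∀ i j σ, Q i j = some σ → L i j = σ := by
  obtain ⟨Q1, h1, h2, h3⟩ := extend_to_n hn hrn (n - s) s (by omega) Q hQ hfull hcount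
  obtain ⟨hT1, hT2, hT3⟩ := transpose_stuff hn hrn h1 h2
  obtain ⟨Q2, g1, g2, g3⟩ := extend_to_n hn le_rfl (n - r) r (by omega) _ hT1 hT2 hT3
  obtain ⟨u1, u2, _⟩ := transpose_stuff hn le_rfl g1 g2
  obtain ⟨L, hL, hLc⟩ := full_to_latin hn u1 u2
  refine ⟨L, hL, ?_⟩
  intro i j σ h
  have hQ1 : Q1 i j = some σ := by rw [h3 i j (by simp [h])]; exact h
  have hQ2 : Q2 j i = some σ := by
    have := g3 j i (show (fun a b => Q1 b a) j i ≠ none by simp only; rw [hQ1]; simp)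
    rw [this, hQ1]
  exact hLc i j σ hQ2

lemma assignment {n t : ℕ} (hn : 0 < n)
    (Holes : Finset (Fin n × Fin n)) (htc : Holes.card = t)
    (A : Fin n × Fin n → Finset (Fin n)) (D : Fin n → ℕ)
    (hDn : ∀ σ, D σ ≤ n)
    (hE1 : ∀ K ⊆ Holes, K.card ≤ ∑ σ : Fin n, ((K.filter fun c => σ ∈ A c).image Prod.fst).card)
    (hE2 : ∀ K ⊆ Holes, K.card + ∑ σ : Fin n, D σ ≤
      t + ∑ σ : Fin n, min (D σ) ((K.filter fun c => σ ∈ A c).image Prod.fst).card) :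
    ∃ f : Fin n × Fin n → Fin n, (∀ c ∈ Holes, f c ∈ A c) ∧
      (∀ c ∈ Holes, ∀ c' ∈ Holes, f c = f c' → c.1 = c'.1 → c = c') ∧
      (∀ σ, D σ ≤ (Holes.filter fun c => f c = σ).card) := by
  classical
  set SD := ∑ σ : Fin n, D σ with hSD
  have hSDt : SD ≤ t := by
    have := hE2 ∅ (Finset.empty_subset _)
    simpa using this
  set tf : ({c // c ∈ Holes} ⊕ (Σ σ : Fin n, Fin (n - D σ))) →
      Finset ((Fin n × Fin n) ⊕ Fin (t - SD)) := fun x =>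
    Sum.rec (fun h => (A h.1).image fun σ => Sum.inl (σ, h.1.1))
      (fun d => ((Finset.univ : Finset (Fin n)).image fun i => Sum.inl (d.1, i)) ∪
        (Finset.univ : Finset (Fin (t - SD))).image Sum.inr) x with htf
  have tfl : ∀ h : {c // c ∈ Holes},
      tf (Sum.inl h) = (A h.1).image fun σ => Sum.inl (σ, h.1.1) := by
    intro h; rw [htf]
  have tfr : ∀ d : (Σ σ : Fin n, Fin (n - D σ)),
      tf (Sum.inr d) = ((Finset.univ : Finset (Fin n)).image fun i => Sum.inl (d.1, i)) ∪
        (Finset.univ : Finset (Fin (t - SD))).image Sum.inr := by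
    intro d; rw [htf]
  have hhall : ∀ S : Finset ({c // c ∈ Holes} ⊕ (Σ σ : Fin n, Fin (n - D σ))),
      S.card ≤ (S.biUnion tf).card := by
    intro S
    set K := S.toLeft.image Subtype.val with hK
    have hKsub : K ⊆ Holes := by
      intro c hc
      rw [hK, Finset.mem_image] at hc
      obtain ⟨h, _, hh⟩ := hc
      rw [← hh]
      exact h.2
    have hKcard : K.card = S.toLeft.card :=
      Finset.card_image_of_injective _ Subtype.val_injective
    set Z := S.toRight.image Sigma.fst with hZ
    set β : Fin n → ℕ := fun σ => ((K.filter fun c => σ ∈ A c).image Prod.fst).card with hβ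
    set U : Finset (Fin n × Fin n) := Finset.univ.biUnion fun σ =>
      ({σ} : Finset (Fin n)) ×ˢ (if σ ∈ Z then Finset.univ
        else ((K.filter fun c => σ ∈ A c).image Prod.fst)) with hU
    have hUcard : U.card = ∑ σ : Fin n, (if σ ∈ Z then n else β σ) := by
      rw [hU, Finset.card_biUnion]
      · refine Finset.sum_congr rfl fun σ _ => ?_
        rw [Finset.card_product, Finset.card_singleton, one_mul]
        by_cases hσ : σ ∈ Z
        · rw [if_pos hσ, if_pos hσ, Finset.card_univ, Fintype.card_fin]
        · rw [if_neg hσ, if_neg hσ]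
      · intro σ _ σ' _ hne
        rw [Function.onFun, Finset.disjoint_left]
        intro p hp hp'
        rw [Finset.mem_product, Finset.mem_singleton] at hp hp'
        exact hne (hp.1 ▸ hp'.1 ▸ rfl)
    have hUsub : U.image Sum.inl ⊆ S.biUnion tf := by
      intro y hy
      rw [Finset.mem_image] at hy
      obtain ⟨p, hp, hpy⟩ := hy
      rw [hU, Finset.mem_biUnion] at hp
      obtain ⟨σ, _, hpσ⟩ := hp
      rw [Finset.mem_product, Finset.mem_singleton] at hpσ
      obtain ⟨hp1, hp2⟩ := hpσ
      by_cases hσZ : σ ∈ Z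
      · rw [hZ, Finset.mem_image] at hσZ
        obtain ⟨d, hd, hdσ⟩ := hσZ
        rw [Finset.mem_biUnion]
        refine ⟨Sum.inr d, Finset.mem_toRight.mp hd, ?_⟩
        rw [tfr, Finset.mem_union]
        left
        rw [Finset.mem_image]
        refine ⟨p.2, Finset.mem_univ _, ?_⟩
        rw [← hpy, hdσ, ← hp1]
      · rw [if_neg hσZ, Finset.mem_image] at hp2
        obtain ⟨c, hc, hcp⟩ := hp2
        rw [Finset.mem_filter] at hc
        have hcK := hc.1
        rw [hK, Finset.mem_image] at hcK
        obtain ⟨h, hhS, hhc⟩ := hcK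
        rw [Finset.mem_biUnion]
        refine ⟨Sum.inl h, Finset.mem_toLeft.mp hhS, ?_⟩
        rw [tfl, Finset.mem_image]
        refine ⟨σ, by rw [hhc]; exact hc.2, ?_⟩
        rw [← hpy, hhc, hcp, ← hp1]
    have hcardsplit : S.card = S.toLeft.card + S.toRight.card :=
      (Finset.card_toLeft_add_card_toRight).symm
    have hfZ : Finset.univ.filter (fun σ : Fin n => σ ∈ Z) = Z := by
      ext σ; simp
    rcases Finset.eq_empty_or_nonempty S.toRight with hSr | hSr
    · have hZe : Z = ∅ := by rw [hZ, hSr, Finset.image_empty]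
      have hcard : U.card = ∑ σ : Fin n, β σ := by
        rw [hUcard]
        refine Finset.sum_congr rfl fun σ _ => ?_
        rw [if_neg (by rw [hZe]; exact Finset.notMem_empty σ)]
      have h1 := hE1 K hKsub
      have h2 : (U.image Sum.inl).card ≤ (S.biUnion tf).card := Finset.card_le_card hUsub
      rw [Finset.card_image_of_injective _ Sum.inl_injective] at h2
      rw [hcardsplit, hSr]
      simp only [Finset.card_empty, add_zero]
      rw [← hKcard]
      calc K.card ≤ ∑ σ : Fin n, β σ := h1
        _ = U.card := hcard.symm
        _ ≤ (S.biUnion tf).card := h2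
    · obtain ⟨d0, hd0⟩ := hSr
      have htrash : (Finset.univ : Finset (Fin (t - SD))).image Sum.inr ⊆ S.biUnion tf := by
        intro y hy
        rw [Finset.mem_biUnion]
        refine ⟨Sum.inr d0, Finset.mem_toRight.mp hd0, ?_⟩
        rw [tfr, Finset.mem_union]
        right
        exact hy
      have hdisj : Disjoint (U.image Sum.inl)
          ((Finset.univ : Finset (Fin (t - SD))).image Sum.inr) := by
        rw [Finset.disjoint_left]
        intro y hy hy'
        rw [Finset.mem_image] at hy hy'
        obtain ⟨p, _, hp⟩ := hy
        obtain ⟨q, _, hq⟩ := hy'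
        rw [← hp] at hq
        exact nomatch hq
      have hbig : U.card + (t - SD) ≤ (S.biUnion tf).card := by
        have := Finset.card_le_card (Finset.union_subset hUsub htrash)
        rwa [Finset.card_union_of_disjoint hdisj,
          Finset.card_image_of_injective _ Sum.inl_injective,
          Finset.card_image_of_injective _ Sum.inr_injective,
          Finset.card_univ, Fintype.card_fin] at this
      have hSrsub : S.toRight ⊆ Z.sigma fun σ => (Finset.univ : Finset (Fin (n - D σ))) := by
        intro d hd
        rw [Finset.mem_sigma]
        exact ⟨by rw [hZ]; exact Finset.mem_image_of_mem _ hd, Finset.mem_univ _⟩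
      have hSrcard : S.toRight.card ≤ ∑ σ ∈ Z, (n - D σ) := by
        have := Finset.card_le_card hSrsub
        rwa [Finset.card_sigma, Finset.sum_congr rfl
          (fun σ _ => by rw [Finset.card_univ, Fintype.card_fin])] at this
      have hZsplit : ∑ σ : Fin n, (if σ ∈ Z then n else β σ)
          = ∑ _σ ∈ Z, n + ∑ σ ∈ Finset.univ.filter (fun σ => σ ∉ Z), β σ := by
        rw [← Finset.sum_filter_add_sum_filter_not Finset.univ (fun σ => σ ∈ Z)]
        congr 1
        · rw [hfZ]
          exact Finset.sum_congr rfl fun σ hσ => if_pos hσ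
        · exact Finset.sum_congr rfl fun σ hσ => if_neg (Finset.mem_filter.mp hσ).2
      have hmin : K.card + SD ≤ t + ∑ σ : Fin n, min (D σ) (β σ) := hE2 K hKsub
      have hminle : ∑ σ : Fin n, min (D σ) (β σ) ≤ ∑ σ ∈ Z, D σ +
          ∑ σ ∈ Finset.univ.filter (fun σ => σ ∉ Z), β σ := by
        rw [← Finset.sum_filter_add_sum_filter_not Finset.univ (fun σ => σ ∈ Z)]
        apply add_le_add
        · rw [hfZ]
          exact Finset.sum_le_sum fun σ _ => min_le_left _ _
        · exact Finset.sum_le_sum fun σ _ => min_le_right _ _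
      have hDsum : ∑ σ ∈ Z, (n - D σ) + ∑ σ ∈ Z, D σ = ∑ _σ ∈ Z, n := by
        rw [← Finset.sum_add_distrib]
        exact Finset.sum_congr rfl fun σ _ => Nat.sub_add_cancel (hDn σ)
      have hU2 : U.card = ∑ _σ ∈ Z, n + ∑ σ ∈ Finset.univ.filter (fun σ => σ ∉ Z), β σ := by
        rw [hUcard, hZsplit]
      rw [hcardsplit, ← hKcard]
      omega
  obtain ⟨F, hFinj, hFmem⟩ := (Finset.all_card_le_biUnion_card_iff_exists_injective tf).mp hhall
  have hcards : Fintype.card ({c // c ∈ Holes} ⊕ (Σ σ : Fin n, Fin (n - D σ)))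
      = Fintype.card ((Fin n × Fin n) ⊕ Fin (t - SD)) := by
    rw [Fintype.card_sum, Fintype.card_coe, Fintype.card_sigma, Fintype.card_sum,
      Fintype.card_prod, Fintype.card_fin, Fintype.card_fin]
    have h1 : ∑ σ : Fin n, Fintype.card (Fin (n - D σ)) = ∑ σ : Fin n, (n - D σ) :=
      Finset.sum_congr rfl fun σ _ => Fintype.card_fin _
    have h2 : ∑ σ : Fin n, (n - D σ) + SD = n * n := by
      rw [hSD, ← Finset.sum_add_distrib]
      have : ∑ σ : Fin n, (n - D σ + D σ) = ∑ _σ : Fin n, n :=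
        Finset.sum_congr rfl fun σ _ => Nat.sub_add_cancel (hDn σ)
      rw [this, Finset.sum_const, Finset.card_univ, Fintype.card_fin, smul_eq_mul]
    rw [h1]
    omega
  have hFbij : Function.Bijective F :=
    (Fintype.bijective_iff_injective_and_card F).mpr ⟨hFinj, hcards⟩
  set f : Fin n × Fin n → Fin n := fun c =>
    if hc : c ∈ Holes then
      Sum.elim (fun p : Fin n × Fin n => p.1) (fun _ => ⟨0, hn⟩) (F (Sum.inl ⟨c, hc⟩))
    else ⟨0, hn⟩ with hf
  have key : ∀ c (hc : c ∈ Holes), f c ∈ A c ∧ F (Sum.inl ⟨c, hc⟩) = Sum.inl (f c, c.1) := by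
    intro c hc
    have hm := hFmem (Sum.inl ⟨c, hc⟩)
    rw [tfl, Finset.mem_image] at hm
    obtain ⟨σ, hσA, hσeq⟩ := hm
    have hfc : f c = σ := by
      rw [hf]
      simp only [dif_pos hc]
      rw [← hσeq]
      rfl
    rw [hfc]
    exact ⟨hσA, hσeq.symm⟩
  refine ⟨f, fun c hc => (key c hc).1, ?_, ?_⟩
  · intro c hc c' hc' hff hrr
    have e1 := (key c hc).2
    have e2 := (key c' hc').2
    rw [hff, hrr] at e1
    have h3 := hFinj (e1.trans e2.symm)
    have h4 : (⟨c, hc⟩ : {c // c ∈ Holes}) = ⟨c', hc'⟩ := Sum.inl_injective h3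
    exact congrArg Subtype.val h4
  · intro σ
    set G : Finset ((Fin n × Fin n) ⊕ Fin (t - SD)) :=
      Finset.univ.image fun i : Fin n => Sum.inl (σ, i) with hG
    have hGinj : Function.Injective
        (fun i : Fin n => (Sum.inl (σ, i) : (Fin n × Fin n) ⊕ Fin (t - SD))) := by
      intro a b hab
      simpa using hab
    have hGcard : G.card = n := by
      rw [hG, Finset.card_image_of_injective _ hGinj, Finset.card_univ, Fintype.card_fin]
    set Pre := Finset.univ.filter
      (fun x : {c // c ∈ Holes} ⊕ (Σ σ : Fin n, Fin (n - D σ)) => F x ∈ G) with hPre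
    have hPrecard : Pre.card = n := by
      have hbij : Pre.card = G.card := by
        apply Finset.card_bij (fun x _ => F x)
        · intro x hx
          rw [hPre, Finset.mem_filter] at hx
          exact hx.2
        · intro x _ y _ h
          exact hFinj h
        · intro y hy
          obtain ⟨x, hx⟩ := hFbij.2 y
          exact ⟨x, by rw [hPre, Finset.mem_filter]; exact ⟨Finset.mem_univ _, by rw [hx]; exact hy⟩,
            hx⟩
      rw [hbij, hGcard]
    have hsplit : Pre.toLeft.card + Pre.toRight.card = Pre.card :=
      Finset.card_toLeft_add_card_toRight
    have hL : Pre.toLeft.card ≤ (Holes.filter fun c => f c = σ).card := by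
      apply Finset.card_le_card_of_injOn (fun h => h.1)
      · intro h hh
        rw [Finset.mem_coe, Finset.mem_toLeft, hPre, Finset.mem_filter] at hh
        have h2 := hh.2
        rw [(key h.1 h.2).2, hG, Finset.mem_image] at h2
        obtain ⟨i, _, hi⟩ := h2
        have : σ = f h.1 ∧ i = h.1.1 := by
          have := Sum.inl_injective hi
          exact ⟨congrArg Prod.fst this, congrArg Prod.snd this⟩
        rw [Finset.mem_coe, Finset.mem_filter]
        exact ⟨h.2, this.1.symm⟩
      · intro a _ b _ hab
        exact Subtype.val_injective hab
    have hdσ : ∀ d ∈ Pre.toRight, d.1 = σ := by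
      intro d hd
      rw [Finset.mem_toRight, hPre, Finset.mem_filter] at hd
      have h2 := hd.2
      have h3 := hFmem (Sum.inr d)
      rw [tfr, Finset.mem_union] at h3
      rcases h3 with h3 | h3
      · rw [Finset.mem_image] at h3
        obtain ⟨i, _, hi⟩ := h3
        rw [hG, Finset.mem_image] at h2
        obtain ⟨i', _, hi'⟩ := h2
        rw [← hi] at hi'
        have := Sum.inl_injective hi'
        exact (congrArg Prod.fst this).symm
      · exfalso
        rw [Finset.mem_image] at h3
        obtain ⟨q, _, hq⟩ := h3
        rw [hG, Finset.mem_image] at h2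
        obtain ⟨i', _, hi'⟩ := h2
        rw [← hq] at hi'
        exact nomatch hi'
    have hR : Pre.toRight.card ≤ n - D σ := by
      have := Finset.card_le_card_of_injOn (s := Pre.toRight)
        (fun d : (Σ σ' : Fin n, Fin (n - D σ')) => (d.2.val : ℕ))
        (t := Finset.range (n - D σ)) ?_ ?_
      · rwa [Finset.card_range] at this
      · intro d hd
        rw [Finset.mem_coe, Finset.mem_range]
        have h1 := hdσ d hd
        have h2 := d.2.2
        rw [← h1]
        exact h2
      · intro d hd d' hd' heq
        have h1 := hdσ d (by simpa using hd)
        have h2 := hdσ d' (by simpa using hd')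
        obtain ⟨s1, v1⟩ := d
        obtain ⟨s2, v2⟩ := d'
        simp only at h1 h2 heq
        subst h1
        subst h2
        congr
        exact Fin.ext heq
    have hDσ := hDn σ
    omega

lemma sum_rowsWith {n : ℕ} {P : Fin n → Fin n → Option (Fin n)} (hP : IsPLS n P) :
    ∑ σ : Fin n, (rowsWith n P σ).card
      = (Finset.univ.filter fun c : Fin n × Fin n => P c.1 c.2 ≠ none).card := by
  classical
  set PS := Finset.univ.filter (fun p : Fin n × Fin n => ∃ j, P p.2 j = some p.1) with hPS
  have h1 : PS.card = ∑ σ : Fin n, (rowsWith n P σ).card := by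
    rw [Finset.card_eq_sum_card_fiberwise (f := Prod.fst) (t := Finset.univ)
      (fun p _ => Finset.mem_univ _)]
    refine Finset.sum_congr rfl fun σ _ => ?_
    apply Finset.card_bij (fun p _ => p.2)
    · intro p hp
      rw [Finset.mem_filter, hPS, Finset.mem_filter] at hp
      rw [rowsWith, Finset.mem_filter]
      refine ⟨Finset.mem_univ _, ?_⟩
      rw [← hp.2]
      exact hp.1.2
    · intro p hp p' hp' heq
      rw [Finset.mem_filter] at hp hp'
      exact Prod.ext (hp.2.trans hp'.2.symm) heq
    · intro i hi
      rw [rowsWith, Finset.mem_filter] at hi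
      refine ⟨(σ, i), ?_, rfl⟩
      rw [Finset.mem_filter, hPS, Finset.mem_filter]
      exact ⟨⟨Finset.mem_univ _, hi.2⟩, rfl⟩
  have h2 : PS.card = (Finset.univ.filter fun c : Fin n × Fin n => P c.1 c.2 ≠ none).card := by
    apply Finset.card_bij (fun p hp => (p.2, Classical.choose
      (show ∃ j, P p.2 j = some p.1 by simpa [hPS] using hp)))
    · intro p hp
      have hspec := Classical.choose_spec (show ∃ j, P p.2 j = some p.1 by simpa [hPS] using hp)
      simp only [Finset.mem_filter, Finset.mem_univ, true_and]
      rw [hspec]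
      simp
    · intro p hp p' hp' heq
      have hspec := Classical.choose_spec (show ∃ j, P p.2 j = some p.1 by simpa [hPS] using hp)
      have hspec' := Classical.choose_spec
        (show ∃ j, P p'.2 j = some p'.1 by simpa [hPS] using hp')
      have e1 : p.2 = p'.2 := congrArg Prod.fst heq
      have e3 : some p.1 = some p'.1 := by
        rw [← hspec, ← hspec']
        exact congrArg (fun q : Fin n × Fin n => P q.1 q.2) heq
      exact Prod.ext (Option.some_inj.mp e3) e1
    · intro c hc
      rw [Finset.mem_filter] at hc
      rcases h : P c.1 c.2 with _ | σ
      · exact absurd h hc.2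
      · have hmem : (σ, c.1) ∈ PS := by
          rw [hPS, Finset.mem_filter]
          exact ⟨Finset.mem_univ _, c.2, h⟩
        refine ⟨(σ, c.1), hmem, ?_⟩
        have hspec := Classical.choose_spec
          (show ∃ j, P (σ, c.1).2 j = some (σ, c.1).1 by simpa [hPS] using hmem)
        have := hP.1 c.1 _ c.2 σ hspec h
        rw [Prod.mk.injEq]
        exact ⟨rfl, this⟩
  rw [← h1, h2]

lemma alpha_le_missing_rows {n : ℕ} {P : Fin n → Fin n → Option (Fin n)}
    (σ : Fin n) (T : Finset (Fin n × Fin n)) (hT : ∀ c ∈ T, P c.1 c.2 = none) :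
    alpha P σ T ≤ (Finset.univ.filter fun i : Fin n => MissingRow P σ i).card := by
  apply Finset.sup_le
  intro S hS
  rw [Finset.mem_filter, Finset.mem_powerset] at hS
  obtain ⟨hST, hind, hsupp⟩ := hS
  apply Finset.card_le_card_of_injOn Prod.fst
  · intro c hc
    rw [Finset.mem_coe, Finset.mem_filter]
    refine ⟨Finset.mem_univ _, ?_⟩
    rcases hsupp c hc with h | h
    · exact absurd (hT c (hST hc)) (by rw [h]; simp)
    · exact h.2.1
  · intro c hc c' hc' heq
    by_contra hne
    exact (hind c hc c' hc' hne).1 heq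

lemma hall_E1 {n : ℕ} {P : Fin n → Fin n → Option (Fin n)} (hHC : HallCond n P)
    (K : Finset (Fin n × Fin n)) :
    K.card ≤ ∑ σ : Fin n, ((K.filter fun c => Supports P σ c).image Prod.fst).card := by
  refine le_trans (hHC K) (Finset.sum_le_sum fun σ _ => ?_)
  apply Finset.sup_le
  intro S hS
  rw [Finset.mem_filter, Finset.mem_powerset] at hS
  obtain ⟨hSK, hind, hsupp⟩ := hS
  have h1 : S.card = (S.image Prod.fst).card := by
    rw [Finset.card_image_of_injOn]
    intro c hc c' hc' heq
    by_contra hne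
    exact (hind c hc c' hc' hne).1 heq
  rw [h1]
  apply Finset.card_le_card
  apply Finset.image_subset_image
  intro c hc
  rw [Finset.mem_filter]
  exact ⟨hSK hc, hsupp c hc⟩

lemma hall_E2 {n r s t : ℕ} (hrn : r ≤ n) (hsn : s ≤ n)
    {P : Fin n → Fin n → Option (Fin n)} (hP : IsPLS n P)
    (hshape1 : ∀ i j : Fin n, P i j ≠ none → i.val < r ∧ j.val < s)
    (ht : (Finset.univ.filter
      (fun c : Fin n × Fin n => c.1.val < r ∧ c.2.val < s ∧ P c.1 c.2 = none)).card = t)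
    (hHC : HallCond n P)
    (K : Finset (Fin n × Fin n))
    (hK : ∀ c ∈ K, c.1.val < r ∧ c.2.val < s ∧ P c.1 c.2 = none) :
    K.card + ∑ σ : Fin n, ((r + s) - (n + (rowsWith n P σ).card)) ≤
      t + ∑ σ : Fin n, min ((r + s) - (n + (rowsWith n P σ).card))
        ((K.filter fun c => Supports P σ c).image Prod.fst).card := by
  classical
  set Rect := Finset.univ.filter (fun c : Fin n × Fin n => c.1.val < r ∧ c.2.val < s) with hRect
  set L := Finset.univ.filter (fun c : Fin n × Fin n => ¬ (c.1.val < r ∧ c.2.val < s)) with hL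
  set T := L ∪ K with hT
  have hTempty : ∀ c ∈ T, P c.1 c.2 = none := by
    intro c hc
    rw [hT, Finset.mem_union] at hc
    rcases hc with hc | hc
    · rw [hL, Finset.mem_filter] at hc
      by_contra hne
      exact hc.2 (hshape1 c.1 c.2 hne)
    · exact (hK c hc).2.2
  have hdisj : Disjoint L K := by
    rw [Finset.disjoint_left]
    intro c hc hc'
    rw [hL, Finset.mem_filter] at hc
    exact hc.2 ⟨(hK c hc').1, (hK c hc').2.1⟩
  have hTcard : T.card = L.card + K.card := by
    rw [hT, Finset.card_union_of_disjoint hdisj]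
  -- per σ bound
  have hperσ : ∀ σ : Fin n, alpha P σ T + ((r + s) - (n + (rowsWith n P σ).card)) ≤
      (Finset.univ.filter fun i : Fin n => MissingRow P σ i).card +
      min ((r + s) - (n + (rowsWith n P σ).card))
        ((K.filter fun c => Supports P σ c).image Prod.fst).card := by
    intro σ
    set β := ((K.filter fun c => Supports P σ c).image Prod.fst).card with hβ
    set mr := (Finset.univ.filter fun i : Fin n => MissingRow P σ i).card with hmr
    have h1 : alpha P σ T ≤ mr := alpha_le_missing_rows σ T hTempty
    have h2 : alpha P σ T ≤ (n - r) + (n - s) + β := by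
      apply Finset.sup_le
      intro S hS
      rw [Finset.mem_filter, Finset.mem_powerset] at hS
      obtain ⟨hST, hind, hsupp⟩ := hS
      have hindf : ∀ S' ⊆ S, Set.InjOn Prod.fst (S' : Set (Fin n × Fin n)) := by
        intro S' hS' c hc c' hc' heq
        by_contra hne
        exact (hind c (hS' hc) c' (hS' hc') hne).1 heq
      have hinds : ∀ S' ⊆ S, Set.InjOn Prod.snd (S' : Set (Fin n × Fin n)) := by
        intro S' hS' c hc c' hc' heq
        by_contra hne
        exact (hind c (hS' hc) c' (hS' hc') hne).2 heq
      have hsplit1 : S.card = (S.filter fun c => r ≤ c.1.val).card +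
          (S.filter fun c => ¬ r ≤ c.1.val).card :=
        (Finset.card_filter_add_card_filter_not _).symm
      have hsplit2 : (S.filter fun c => ¬ r ≤ c.1.val).card =
          ((S.filter fun c => ¬ r ≤ c.1.val).filter fun c => s ≤ c.2.val).card +
          ((S.filter fun c => ¬ r ≤ c.1.val).filter fun c => ¬ s ≤ c.2.val).card :=
        (Finset.card_filter_add_card_filter_not _).symm
      have hb1 : (S.filter fun c => r ≤ c.1.val).card ≤ n - r := by
        rw [← card_filter_not_val_lt n r hrn]
        apply Finset.card_le_card_of_injOn Prod.fst
        · intro c hc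
          rw [Finset.mem_coe, Finset.mem_filter] at hc ⊢
          exact ⟨Finset.mem_univ _, by omega⟩
        · exact hindf _ (Finset.filter_subset _ _)
      have hb2 : ((S.filter fun c => ¬ r ≤ c.1.val).filter fun c => s ≤ c.2.val).card ≤ n - s := by
        rw [← card_filter_not_val_lt n s hsn]
        apply Finset.card_le_card_of_injOn Prod.snd
        · intro c hc
          rw [Finset.mem_coe, Finset.mem_filter] at hc ⊢
          exact ⟨Finset.mem_univ _, by omega⟩
        · exact hinds _ ((Finset.filter_subset _ _).trans (Finset.filter_subset _ _))
      have hb3 : ((S.filter fun c => ¬ r ≤ c.1.val).filter fun c => ¬ s ≤ c.2.val).card ≤ β := by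
        rw [hβ]
        have hsub : ((S.filter fun c => ¬ r ≤ c.1.val).filter fun c => ¬ s ≤ c.2.val) ⊆
            K.filter fun c => Supports P σ c := by
          intro c hc
          rw [Finset.mem_filter, Finset.mem_filter] at hc
          obtain ⟨⟨hcS, hc1⟩, hc2⟩ := hc
          have hcT := hST hcS
          rw [hT, Finset.mem_union] at hcT
          rcases hcT with hcT | hcT
          · exfalso
            rw [hL, Finset.mem_filter] at hcT
            exact hcT.2 ⟨by omega, by omega⟩
          · rw [Finset.mem_filter]
            exact ⟨hcT, hsupp c hcS⟩
        calc ((S.filter fun c => ¬ r ≤ c.1.val).filter fun c => ¬ s ≤ c.2.val).card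
            = (((S.filter fun c => ¬ r ≤ c.1.val).filter fun c => ¬ s ≤ c.2.val).image
                Prod.fst).card := by
              rw [Finset.card_image_of_injOn
                (hindf _ ((Finset.filter_subset _ _).trans (Finset.filter_subset _ _)))]
          _ ≤ _ := Finset.card_le_card (Finset.image_subset_image hsub)
      omega
    have h3 : mr + (rowsWith n P σ).card = n := by
      have heq : (Finset.univ.filter fun i : Fin n => MissingRow P σ i) =
          Finset.univ \ rowsWith n P σ := by
        ext i
        rw [Finset.mem_filter, Finset.mem_sdiff, rowsWith, Finset.mem_filter]
        constructor
        · rintro ⟨h4, h5⟩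
          refine ⟨h4, ?_⟩
          rintro ⟨_, j, hj⟩
          exact h5 j hj
        · rintro ⟨h4, h5⟩
          exact ⟨h4, fun j hj => h5 ⟨Finset.mem_univ _, j, hj⟩⟩
      have hsub : rowsWith n P σ ⊆ Finset.univ := Finset.subset_univ _
      rw [hmr, heq, Finset.card_sdiff_of_subset hsub, Finset.card_univ, Fintype.card_fin]
      have := Finset.card_le_card hsub
      rw [Finset.card_univ, Fintype.card_fin] at this
      omega
    rcases le_total ((r + s) - (n + (rowsWith n P σ).card)) β with hc | hc
    · rw [min_eq_left hc]
      omega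
    · rw [min_eq_right hc]
      omega
  -- card computations
  have hRectcard : Rect.card = r * s := by
    have heq : Rect = (Finset.univ.filter fun i : Fin n => i.val < r) ×ˢ
        (Finset.univ.filter fun j : Fin n => j.val < s) := by
      ext c
      rw [hRect, Finset.mem_filter, Finset.mem_product, Finset.mem_filter, Finset.mem_filter]
      constructor
      · rintro ⟨_, h1, h2⟩
        exact ⟨⟨Finset.mem_univ _, h1⟩, ⟨Finset.mem_univ _, h2⟩⟩
      · rintro ⟨⟨_, h1⟩, ⟨_, h2⟩⟩
        exact ⟨Finset.mem_univ _, h1, h2⟩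
    rw [heq, Finset.card_product, card_filter_val_lt n r hrn, card_filter_val_lt n s hsn]
  have hLcard : L.card + r * s = n * n := by
    have heq : L = Finset.univ \ Rect := by
      rw [hL, hRect, Finset.filter_not]
    rw [heq, Finset.card_sdiff_of_subset (Finset.subset_univ _), Finset.card_univ, Fintype.card_prod,
      Fintype.card_fin, hRectcard]
    have := Finset.card_le_card (Finset.subset_univ Rect)
    rw [Finset.card_univ, Fintype.card_prod, Fintype.card_fin] at this
    rw [hRectcard] at this
    omega
  have hfilled : (Finset.univ.filter fun c : Fin n × Fin n => P c.1 c.2 ≠ none).card + t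
      = r * s := by
    have heq1 : (Finset.univ.filter fun c : Fin n × Fin n => P c.1 c.2 ≠ none) =
        Rect.filter fun c => P c.1 c.2 ≠ none := by
      ext c
      rw [Finset.mem_filter, Finset.mem_filter, hRect, Finset.mem_filter]
      constructor
      · rintro ⟨_, h1⟩
        exact ⟨⟨Finset.mem_univ _, hshape1 c.1 c.2 h1⟩, h1⟩
      · rintro ⟨⟨h0, _⟩, h2⟩
        exact ⟨h0, h2⟩
    have heq2 : (Finset.univ.filter
        (fun c : Fin n × Fin n => c.1.val < r ∧ c.2.val < s ∧ P c.1 c.2 = none)) =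
        Rect.filter fun c => ¬ P c.1 c.2 ≠ none := by
      ext c
      rw [Finset.mem_filter, Finset.mem_filter, hRect, Finset.mem_filter]
      constructor
      · rintro ⟨h0, h1, h2, h3⟩
        exact ⟨⟨h0, h1, h2⟩, by simp [h3]⟩
      · rintro ⟨⟨h0, h1, h2⟩, h3⟩
        push_neg at h3
        exact ⟨h0, h1, h2, h3⟩
    rw [heq1, ← hRectcard, ← Finset.card_filter_add_card_filter_not
      (s := Rect) (p := fun c => P c.1 c.2 ≠ none)]
    rw [← ht, heq2]
  have hsum := sum_rowsWith hP
  have hHCT := hHC T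
  have hsumper : ∑ σ : Fin n, alpha P σ T + ∑ σ : Fin n, ((r + s) - (n + (rowsWith n P σ).card))
      ≤ ∑ σ : Fin n, (Finset.univ.filter fun i : Fin n => MissingRow P σ i).card +
        ∑ σ : Fin n, min ((r + s) - (n + (rowsWith n P σ).card))
          ((K.filter fun c => Supports P σ c).image Prod.fst).card := by
    rw [← Finset.sum_add_distrib, ← Finset.sum_add_distrib]
    exact Finset.sum_le_sum fun σ _ => hperσ σ
  have hmrsum : ∑ σ : Fin n, (Finset.univ.filter fun i : Fin n => MissingRow P σ i).card +
      ∑ σ : Fin n, (rowsWith n P σ).card = n * n := by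
    rw [← Finset.sum_add_distrib]
    have heq : ∀ σ : Fin n, (Finset.univ.filter fun i : Fin n => MissingRow P σ i).card +
        (rowsWith n P σ).card = n := by
      intro σ
      have heq2 : (Finset.univ.filter fun i : Fin n => MissingRow P σ i) =
          Finset.univ \ rowsWith n P σ := by
        ext i
        rw [Finset.mem_filter, Finset.mem_sdiff, rowsWith, Finset.mem_filter]
        constructor
        · rintro ⟨h4, h5⟩
          refine ⟨h4, ?_⟩
          rintro ⟨_, j, hj⟩
          exact h5 j hj
        · rintro ⟨h4, h5⟩
          exact ⟨h4, fun j hj => h5 ⟨Finset.mem_univ _, j, hj⟩⟩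
      rw [heq2, Finset.card_sdiff_of_subset (Finset.subset_univ _), Finset.card_univ, Fintype.card_fin]
      have := Finset.card_le_card (Finset.subset_univ (rowsWith n P σ))
      rw [Finset.card_univ, Fintype.card_fin] at this
      omega
    rw [Finset.sum_congr rfl fun σ _ => heq σ, Finset.sum_const, Finset.card_univ,
      Fintype.card_fin, smul_eq_mul]
  omega

end Aux

theorem stmt9 (n r s t : ℕ) (hr : 1 ≤ r) (hrn : r ≤ n) (hs : 1 ≤ s) (hsn : s ≤ n)
    (P : Fin n → Fin n → Option (Fin n)) (hP : IsPLS n P)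
    (hshape1 : ∀ i j : Fin n, P i j ≠ none → i.val < r ∧ j.val < s)
    (hshape2 : ∀ j : Fin n, j.val < s →
      (Finset.univ.filter (fun i : Fin n => i.val < r ∧ P i j = none)).card ≤ 1)
    (ht : (Finset.univ.filter
      (fun c : Fin n × Fin n => c.1.val < r ∧ c.2.val < s ∧ P c.1 c.2 = none)).card = t) :
    (∃ L, Completes n P L) ↔ HallCond n P := by
  constructor
  · rintro ⟨L, hL⟩
    exact easy_direction P L hL
  · intro hHC
    classical
    have hn : 0 < n := lt_of_lt_of_le hr hrn
    set Holes := Finset.univ.filter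
      (fun c : Fin n × Fin n => c.1.val < r ∧ c.2.val < s ∧ P c.1 c.2 = none) with hHoles
    have hole_char : ∀ c : Fin n × Fin n,
        c ∈ Holes ↔ (c.1.val < r ∧ c.2.val < s ∧ P c.1 c.2 = none) := by
      intro c
      rw [hHoles, Finset.mem_filter]
      simp
    set A : Fin n × Fin n → Finset (Fin n) :=
      fun c => Finset.univ.filter fun σ => Supports P σ c with hA
    have hfiltereq : ∀ (K : Finset (Fin n × Fin n)) (σ : Fin n),
        K.filter (fun c => σ ∈ A c) = K.filter (fun c => Supports P σ c) := by
      intro K σ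
      apply Finset.filter_congr
      intro c _
      rw [hA]
      simp
    have ht' : Holes.card = t := by rw [hHoles]; exact ht
    have hDn : ∀ σ : Fin n, (r + s) - (n + (rowsWith n P σ).card) ≤ n := by
      intro σ
      omega
    have hE1' : ∀ K ⊆ Holes, K.card ≤
        ∑ σ : Fin n, ((K.filter fun c => σ ∈ A c).image Prod.fst).card := by
      intro K _
      have hsc : ∑ σ : Fin n, ((K.filter fun c => σ ∈ A c).image Prod.fst).card
          = ∑ σ : Fin n, ((K.filter fun c => Supports P σ c).image Prod.fst).card :=
        Finset.sum_congr rfl fun σ _ => by rw [hfiltereq K σ]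
      rw [hsc]
      exact hall_E1 hHC K
    have hE2' : ∀ K ⊆ Holes, K.card + ∑ σ : Fin n, ((r + s) - (n + (rowsWith n P σ).card)) ≤
        t + ∑ σ : Fin n, min ((r + s) - (n + (rowsWith n P σ).card))
          ((K.filter fun c => σ ∈ A c).image Prod.fst).card := by
      intro K hKsub
      have hK : ∀ c ∈ K, c.1.val < r ∧ c.2.val < s ∧ P c.1 c.2 = none := by
        intro c hc
        exact (hole_char c).mp (hKsub hc)
      have hsc : ∑ σ : Fin n, min ((r + s) - (n + (rowsWith n P σ).card))
            ((K.filter fun c => σ ∈ A c).image Prod.fst).card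
          = ∑ σ : Fin n, min ((r + s) - (n + (rowsWith n P σ).card))
            ((K.filter fun c => Supports P σ c).image Prod.fst).card :=
        Finset.sum_congr rfl fun σ _ => by rw [hfiltereq K σ]
      rw [hsc]
      exact hall_E2 hrn hsn hP hshape1 ht hHC K hK
    obtain ⟨f, hf1, hf2, hf3⟩ := assignment hn Holes ht' A
      (fun σ => (r + s) - (n + (rowsWith n P σ).card)) hDn hE1' hE2'
    have hsupp : ∀ c ∈ Holes, MissingRow P (f c) c.1 ∧ MissingCol P (f c) c.2 := by
      intro c hc
      have hm := hf1 c hc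
      rw [hA, Finset.mem_filter] at hm
      rcases hm.2 with h | h
      · exfalso
        rw [((hole_char c).mp hc).2.2] at h
        exact nomatch h
      · exact ⟨h.2.1, h.2.2⟩
    set P1 : Fin n → Fin n → Option (Fin n) :=
      fun i j => if (i, j) ∈ Holes then some (f (i, j)) else P i j with hP1
    have hpls1 : IsPLS n P1 := by
      constructor
      · intro i j j' σ h1 h2
        simp only [hP1] at h1 h2
        by_cases c1 : (i, j) ∈ Holes <;> by_cases c2 : (i, j') ∈ Holes
        · rw [if_pos c1] at h1
          rw [if_pos c2] at h2
          have := hf2 (i, j) c1 (i, j') c2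
            ((Option.some_inj.mp h1).trans (Option.some_inj.mp h2).symm) rfl
          exact congrArg Prod.snd this
        · rw [if_pos c1] at h1
          rw [if_neg c2] at h2
          exfalso
          apply (hsupp (i, j) c1).1 j'
          rw [Option.some_inj.mp h1]
          exact h2
        · rw [if_neg c1] at h1
          rw [if_pos c2] at h2
          exfalso
          apply (hsupp (i, j') c2).1 j
          rw [Option.some_inj.mp h2]
          exact h1
        · rw [if_neg c1] at h1
          rw [if_neg c2] at h2
          exact hP.1 i j j' σ h1 h2
      · intro i i' j σ h1 h2
        simp only [hP1] at h1 h2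
        by_cases c1 : (i, j) ∈ Holes <;> by_cases c2 : (i', j) ∈ Holes
        · have hj : j.val < s := ((hole_char (i, j)).mp c1).2.1
          have hcard := hshape2 j hj
          have hmem1 : i ∈ Finset.univ.filter (fun i : Fin n => i.val < r ∧ P i j = none) := by
            rw [Finset.mem_filter]
            have := (hole_char (i, j)).mp c1
            exact ⟨Finset.mem_univ _, this.1, this.2.2⟩
          have hmem2 : i' ∈ Finset.univ.filter (fun i : Fin n => i.val < r ∧ P i j = none) := by
            rw [Finset.mem_filter]
            have := (hole_char (i', j)).mp c2
            exact ⟨Finset.mem_univ _, this.1, this.2.2⟩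
          exact Finset.card_le_one.mp hcard i hmem1 i' hmem2
        · rw [if_pos c1] at h1
          rw [if_neg c2] at h2
          exfalso
          apply (hsupp (i, j) c1).2 i'
          rw [Option.some_inj.mp h1]
          exact h2
        · rw [if_neg c1] at h1
          rw [if_pos c2] at h2
          exfalso
          apply (hsupp (i', j) c2).2 i
          rw [Option.some_inj.mp h2]
          exact h1
        · rw [if_neg c1] at h1
          rw [if_neg c2] at h2
          exact hP.2 i i' j σ h1 h2
    have hfull : IsFull n r s P1 := by
      intro i j
      by_cases c : (i, j) ∈ Holes
      · simp only [hP1, if_pos c]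
        have hch := (hole_char (i, j)).mp c
        constructor
        · intro _
          exact ⟨hch.1, hch.2.1⟩
        · intro _
          simp
      · simp only [hP1, if_neg c]
        constructor
        · exact hshape1 i j
        · rintro ⟨h1, h2⟩ hnone
          exact c ((hole_char (i, j)).mpr ⟨h1, h2, hnone⟩)
    have hcount : ∀ σ, r + s ≤ n + (rowsWith n P1 σ).card := by
      intro σ
      have hsub : rowsWith n P σ ∪ ((Holes.filter fun c => f c = σ).image Prod.fst)
          ⊆ rowsWith n P1 σ := by
        apply Finset.union_subset
        · intro i hi
          rw [rowsWith, Finset.mem_filter] at hi ⊢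
          obtain ⟨_, j, hj⟩ := hi
          refine ⟨Finset.mem_univ _, j, ?_⟩
          have hnh : (i, j) ∉ Holes := by
            intro hmem
            rw [((hole_char (i, j)).mp hmem).2.2] at hj
            exact nomatch hj
          simp only [hP1, if_neg hnh]
          exact hj
        · intro i hi
          rw [Finset.mem_image] at hi
          obtain ⟨c, hc, hci⟩ := hi
          rw [Finset.mem_filter] at hc
          rw [rowsWith, Finset.mem_filter]
          refine ⟨Finset.mem_univ _, c.2, ?_⟩
          have hmem : (i, c.2) ∈ Holes := by
            rw [← hci]
            exact hc.1
          simp only [hP1, if_pos hmem]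
          rw [← hci]
          exact congrArg some hc.2
      have hdisj : Disjoint (rowsWith n P σ)
          ((Holes.filter fun c => f c = σ).image Prod.fst) := by
        rw [Finset.disjoint_left]
        intro i hi hi'
        rw [rowsWith, Finset.mem_filter] at hi
        obtain ⟨_, j, hj⟩ := hi
        rw [Finset.mem_image] at hi'
        obtain ⟨c, hc, hci⟩ := hi'
        rw [Finset.mem_filter] at hc
        have hmr := (hsupp c hc.1).1
        rw [hc.2, hci] at hmr
        exact hmr j hj
      have himg : ((Holes.filter fun c => f c = σ).image Prod.fst).card
          = (Holes.filter fun c => f c = σ).card := by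
        rw [Finset.card_image_of_injOn]
        intro c hc c' hc' heq
        rw [Finset.mem_coe, Finset.mem_filter] at hc hc'
        exact hf2 c hc.1 c' hc'.1 (hc.2.trans hc'.2.symm) heq
      have hcard := Finset.card_le_card hsub
      rw [Finset.card_union_of_disjoint hdisj, himg] at hcard
      have h3 := hf3 σ
      omega
    obtain ⟨L, hLat, hLc⟩ := complete_full_rect hn hrn hsn hpls1 hfull hcount
    refine ⟨L, hLat, ?_⟩
    intro i j σ h
    apply hLc
    have hnh : (i, j) ∉ Holes := by
      intro hmem
      rw [((hole_char (i, j)).mp hmem).2.2] at h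
      exact nomatch h
    simp only [hP1, if_neg hnh]
    exact h
end

section
/- The 6×6 partial latin square whose first three rows are (1,2,3,4,5,6), (3,6,1,2,4,5), (5,4,2,6,3,1) and whose last three rows have first two columns filled with (2,5), (4,1), (6,3) respectively and remaining cells empty, satisfies Hall's Condition but is not completable to a latin square of order 6. -/
open scoped Classical

/-- Goldwasser's square (symbols `1,…,6` encoded as `0,…,5 : Fin 6`). -/
def goldwasser : Fin 6 → Fin 6 → Option (Fin 6) :=
  ![![some 0, some 1, some 2, some 3, some 4, some 5],
    ![some 2, some 5, some 0, some 1, some 3, some 4],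
    ![some 4, some 3, some 1, some 5, some 2, some 0],
    ![some 1, some 4, none, none, none, none],
    ![some 3, some 0, none, none, none, none],
    ![some 5, some 2, none, none, none, none]]

instance {n : ℕ} (P : Fin n → Fin n → Option (Fin n)) (σ i : Fin n) : Decidable (MissingRow P σ i) := by
  unfold MissingRow; infer_instance
instance {n : ℕ} (P : Fin n → Fin n → Option (Fin n)) (σ j : Fin n) : Decidable (MissingCol P σ j) := by
  unfold MissingCol; infer_instance
instance {n : ℕ} (P : Fin n → Fin n → Option (Fin n)) (σ : Fin n) (c : Fin n × Fin n) : Decidable (Supports P σ c) := by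
  unfold Supports; infer_instance
instance {n : ℕ} (S : Finset (Fin n × Fin n)) : Decidable (IndepCells S) := by
  unfold IndepCells; infer_instance
instance (n : ℕ) (P : Fin n → Fin n → Option (Fin n)) : Decidable (IsPLS n P) := by
  unfold IsPLS; infer_instance

def grid : Fin 6 → Finset (Fin 6 × Fin 6) :=
  ![{(3,3),(3,4),(5,3),(5,4)},
    {(4,4),(4,5),(5,4),(5,5)},
    {(3,3),(3,5),(4,3),(4,5)},
    {(3,2),(3,5),(5,2),(5,5)},
    {(4,2),(4,3),(5,2),(5,3)},
    {(3,2),(3,4),(4,2),(4,4)}]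

lemma gw_pls : IsPLS 6 goldwasser := by decide

lemma grid_supports : ∀ σ : Fin 6, ∀ c ∈ grid σ, goldwasser c.1 c.2 = none ∧ Supports goldwasser σ c := by decide

lemma cell_count : ∀ c : Fin 6 × Fin 6,
    (Finset.univ.filter fun σ => c ∈ grid σ).card = if goldwasser c.1 c.2 = none then 2 else 0 := by decide

lemma symb_count : ∀ c : Fin 6 × Fin 6,
    (Finset.univ.filter fun σ : Fin 6 => goldwasser c.1 c.2 = some σ).card = if goldwasser c.1 c.2 = none then 0 else 1 := by decide

lemma pair_indep {i1 i2 j1 j2 : Fin 6} (hi : i1 ≠ i2) (hj : j1 ≠ j2) :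
    IndepCells ({(i1, j1), (i2, j2)} : Finset (Fin 6 × Fin 6)) := by
  intro c hc c' hc' hne
  simp only [Finset.mem_insert, Finset.mem_singleton] at hc hc'
  rcases hc with rfl | rfl <;> rcases hc' with rfl | rfl <;>
    first | exact absurd rfl hne | exact ⟨hi, hj⟩ | exact ⟨hi.symm, hj.symm⟩

lemma twobytwo {i1 i2 j1 j2 : Fin 6} (hi : i1 ≠ i2) (hj : j1 ≠ j2)
    (E : Finset (Fin 6 × Fin 6))
    (hE : E ⊆ {(i1, j1), (i1, j2), (i2, j1), (i2, j2)}) :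
    ∃ M ⊆ E, IndepCells M ∧ E.card ≤ 2 * M.card := by
  by_cases h1 : (i1, j1) ∈ E ∧ (i2, j2) ∈ E
  · refine ⟨{(i1, j1), (i2, j2)}, ?_, pair_indep hi hj, ?_⟩
    · intro x hx
      simp only [Finset.mem_insert, Finset.mem_singleton] at hx
      rcases hx with rfl | rfl
      · exact h1.1
      · exact h1.2
    · have h4 : E.card ≤ 4 := by
        calc E.card ≤ ({(i1, j1), (i1, j2), (i2, j1), (i2, j2)} : Finset (Fin 6 × Fin 6)).card :=
              Finset.card_le_card hE
          _ ≤ 4 := by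
              apply le_trans (Finset.card_insert_le _ _)
              apply Nat.succ_le_succ
              apply le_trans (Finset.card_insert_le _ _)
              apply Nat.succ_le_succ
              exact le_trans (Finset.card_insert_le _ _) (Nat.succ_le_succ (Finset.card_singleton _).le)
      have h2 : ({(i1, j1), (i2, j2)} : Finset (Fin 6 × Fin 6)).card = 2 := by
        rw [Finset.card_insert_of_notMem, Finset.card_singleton]
        simp only [Finset.mem_singleton]
        intro h; exact hi (congrArg Prod.fst h)
      omega
  · by_cases h2 : (i1, j2) ∈ E ∧ (i2, j1) ∈ E
    · refine ⟨{(i1, j2), (i2, j1)}, ?_, pair_indep hi hj.symm, ?_⟩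
      · intro x hx
        simp only [Finset.mem_insert, Finset.mem_singleton] at hx
        rcases hx with rfl | rfl
        · exact h2.1
        · exact h2.2
      · have h4 : E.card ≤ 4 := by
          calc E.card ≤ ({(i1, j1), (i1, j2), (i2, j1), (i2, j2)} : Finset (Fin 6 × Fin 6)).card :=
                Finset.card_le_card hE
            _ ≤ 4 := by
                apply le_trans (Finset.card_insert_le _ _)
                apply Nat.succ_le_succ
                apply le_trans (Finset.card_insert_le _ _)
                apply Nat.succ_le_succ
                exact le_trans (Finset.card_insert_le _ _) (Nat.succ_le_succ (Finset.card_singleton _).le)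
        have hc2 : ({(i1, j2), (i2, j1)} : Finset (Fin 6 × Fin 6)).card = 2 := by
          rw [Finset.card_insert_of_notMem, Finset.card_singleton]
          simp only [Finset.mem_singleton]
          intro h; exact hi (congrArg Prod.fst h)
        omega
    ·
      rcases E.eq_empty_or_nonempty with rfl | ⟨x, hx⟩
      · exact ⟨∅, Finset.Subset.refl _, by intro c hc; simp at hc, by simp⟩
      · refine ⟨{x}, Finset.singleton_subset_iff.mpr hx, ?_, ?_⟩
        · intro c hc c' hc' hne
          simp only [Finset.mem_singleton] at hc hc'
          subst hc; subst hc'; exact absurd rfl hne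
        · rw [Finset.card_singleton]
          -- show E.card ≤ 2
          push_neg at h1 h2
          by_cases ha : (i1, j1) ∈ E
          · have hd : (i2, j2) ∉ E := h1 ha
            by_cases hb : (i1, j2) ∈ E
            · have hc : (i2, j1) ∉ E := h2 hb
              have : E ⊆ {(i1, j1), (i1, j2)} := by
                intro y hy
                have := hE hy
                simp only [Finset.mem_insert, Finset.mem_singleton] at this ⊢
                rcases this with rfl | rfl | rfl | rfl
                · exact Or.inl rfl
                · exact Or.inr rfl
                · exact absurd hy hc
                · exact absurd hy hd
              calc E.card ≤ _ := Finset.card_le_card this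
                _ ≤ 2 := le_trans (Finset.card_insert_le _ _) (Nat.succ_le_succ (Finset.card_singleton _).le)
            · have : E ⊆ {(i1, j1), (i2, j1)} := by
                intro y hy
                have := hE hy
                simp only [Finset.mem_insert, Finset.mem_singleton] at this ⊢
                rcases this with rfl | rfl | rfl | rfl
                · exact Or.inl rfl
                · exact absurd hy hb
                · exact Or.inr rfl
                · exact absurd hy hd
              calc E.card ≤ _ := Finset.card_le_card this
                _ ≤ 2 := le_trans (Finset.card_insert_le _ _) (Nat.succ_le_succ (Finset.card_singleton _).le)
          · by_cases hc : (i2, j1) ∈ E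
            · have hb' : (i1, j2) ∉ E := by intro hb'; exact (h2 hb') hc
              have : E ⊆ {(i2, j1), (i2, j2)} := by
                intro y hy
                have := hE hy
                simp only [Finset.mem_insert, Finset.mem_singleton] at this ⊢
                rcases this with rfl | rfl | rfl | rfl
                · exact absurd hy ha
                · exact absurd hy hb'
                · exact Or.inl rfl
                · exact Or.inr rfl
              calc E.card ≤ _ := Finset.card_le_card this
                _ ≤ 2 := le_trans (Finset.card_insert_le _ _) (Nat.succ_le_succ (Finset.card_singleton _).le)
            · have : E ⊆ {(i1, j2), (i2, j2)} := by
                intro y hy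
                have := hE hy
                simp only [Finset.mem_insert, Finset.mem_singleton] at this ⊢
                rcases this with rfl | rfl | rfl | rfl
                · exact absurd hy ha
                · exact Or.inl rfl
                · exact absurd hy hc
                · exact Or.inr rfl
              calc E.card ≤ _ := Finset.card_le_card this
                _ ≤ 2 := le_trans (Finset.card_insert_le _ _) (Nat.succ_le_succ (Finset.card_singleton _).le)

lemma grid_matching (σ : Fin 6) (E : Finset (Fin 6 × Fin 6)) (hE : E ⊆ grid σ) :
    ∃ M ⊆ E, IndepCells M ∧ E.card ≤ 2 * M.card := by
  fin_cases σ
  · exact twobytwo (i1 := 3) (i2 := 5) (j1 := 3) (j2 := 4) (by decide) (by decide) E hE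
  · exact twobytwo (i1 := 4) (i2 := 5) (j1 := 4) (j2 := 5) (by decide) (by decide) E hE
  · exact twobytwo (i1 := 3) (i2 := 4) (j1 := 3) (j2 := 5) (by decide) (by decide) E hE
  · exact twobytwo (i1 := 3) (i2 := 5) (j1 := 2) (j2 := 5) (by decide) (by decide) E hE
  · exact twobytwo (i1 := 4) (i2 := 5) (j1 := 2) (j2 := 3) (by decide) (by decide) E hE
  · exact twobytwo (i1 := 3) (i2 := 4) (j1 := 2) (j2 := 4) (by decide) (by decide) E hE

theorem stmt10 : HallCond 6 goldwasser ∧ ¬ ∃ L, Completes 6 goldwasser L := by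
  constructor
  · intro T
    classical
    set F : Fin 6 → Finset (Fin 6 × Fin 6) :=
      fun σ => T.filter (fun c => goldwasser c.1 c.2 = some σ) with hF
    set E : Fin 6 → Finset (Fin 6 × Fin 6) :=
      fun σ => T.filter (fun c => c ∈ grid σ) with hEdef
    have hEsub : ∀ σ, E σ ⊆ grid σ := fun σ c hc => (Finset.mem_filter.mp hc).2
    have hM := fun σ => grid_matching σ (E σ) (hEsub σ)
    choose M hME hMI hMcard using hM
    have hFmem : ∀ σ, ∀ c ∈ F σ, goldwasser c.1 c.2 = some σ :=
      fun σ c hc => (Finset.mem_filter.mp hc).2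
    have key : ∀ σ, (F σ).card + (M σ).card ≤ alpha goldwasser σ T := by
      intro σ
      have hMT : M σ ⊆ T := fun c hc => (Finset.mem_filter.mp (hME σ hc)).1
      have hMempty : ∀ c ∈ M σ, goldwasser c.1 c.2 = none :=
        fun c hc => (grid_supports σ c (hEsub σ (hME σ hc))).1
      have hMsupp : ∀ c ∈ M σ, Supports goldwasser σ c :=
        fun c hc => (grid_supports σ c (hEsub σ (hME σ hc))).2
      have hMmiss : ∀ c ∈ M σ, MissingRow goldwasser σ c.1 ∧ MissingCol goldwasser σ c.2 := by
        intro c hc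
        rcases hMsupp c hc with h | h
        · rw [hMempty c hc] at h; exact absurd h (by simp)
        · exact h.2
      have hdisj : Disjoint (F σ) (M σ) := by
        rw [Finset.disjoint_left]
        intro c hcF hcM
        have := hFmem σ c hcF
        rw [hMempty c hcM] at this
        exact absurd this (by simp)
      have hindep : IndepCells (F σ ∪ M σ) := by
        intro c hc c' hc' hne
        rcases Finset.mem_union.mp hc with hc1 | hc1 <;>
          rcases Finset.mem_union.mp hc' with hc2 | hc2
        · constructor
          · intro h
            apply hne
            have h2 : goldwasser c.1 c'.2 = some σ := by rw [h]; exact hFmem σ c' hc2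
            exact Prod.ext h (gw_pls.1 c.1 c.2 c'.2 σ (hFmem σ c hc1) h2)
          · intro h
            apply hne
            have h2 : goldwasser c'.1 c.2 = some σ := by rw [h]; exact hFmem σ c' hc2
            exact Prod.ext (gw_pls.2 c.1 c'.1 c.2 σ (hFmem σ c hc1) h2) h
        · have hm := hMmiss c' hc2
          constructor
          · intro h; exact hm.1 c.2 (by rw [← h]; exact hFmem σ c hc1)
          · intro h; exact hm.2 c.1 (by rw [← h]; exact hFmem σ c hc1)
        · have hm := hMmiss c hc1
          constructor
          · intro h; exact hm.1 c'.2 (by rw [h]; exact hFmem σ c' hc2)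
          · intro h; exact hm.2 c'.1 (by rw [h]; exact hFmem σ c' hc2)
        · exact hMI σ c hc1 c' hc2 hne
      have hsupp : ∀ c ∈ F σ ∪ M σ, Supports goldwasser σ c := by
        intro c hc
        rcases Finset.mem_union.mp hc with h | h
        · exact Or.inl (hFmem σ c h)
        · exact hMsupp c h
      have hsub : F σ ∪ M σ ⊆ T := Finset.union_subset (Finset.filter_subset _ _) hMT
      calc (F σ).card + (M σ).card = (F σ ∪ M σ).card :=
            (Finset.card_union_of_disjoint hdisj).symm
        _ ≤ alpha goldwasser σ T := by
            unfold alpha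
            apply Finset.le_sup (f := Finset.card)
            simp only [Finset.mem_filter, Finset.mem_powerset]
            exact ⟨hsub, hindep, hsupp⟩
    have sumF : ∑ σ : Fin 6, (F σ).card
        = (T.filter (fun c => ¬ goldwasser c.1 c.2 = none)).card := by
      have h1 : ∀ σ : Fin 6, (F σ).card
          = ∑ c ∈ T, if goldwasser c.1 c.2 = some σ then 1 else 0 := by
        intro σ; rw [hF]; exact Finset.card_filter _ _
      rw [Finset.sum_congr rfl (fun σ _ => h1 σ), Finset.sum_comm, Finset.card_filter]
      refine Finset.sum_congr rfl fun c _ => ?_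
      have h2 := symb_count c
      rw [Finset.card_filter] at h2
      rw [h2]
      by_cases h : goldwasser c.1 c.2 = none <;> simp [h]
    have sumE : ∑ σ : Fin 6, (E σ).card
        = 2 * (T.filter (fun c => goldwasser c.1 c.2 = none)).card := by
      have h1 : ∀ σ : Fin 6, (E σ).card
          = ∑ c ∈ T, if c ∈ grid σ then 1 else 0 := by
        intro σ; rw [hEdef]; exact Finset.card_filter _ _
      rw [Finset.sum_congr rfl (fun σ _ => h1 σ), Finset.sum_comm, Finset.card_filter,
        Finset.mul_sum]
      refine Finset.sum_congr rfl fun c _ => ?_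
      have h2 := cell_count c
      rw [Finset.card_filter] at h2
      rw [h2]
      by_cases h : goldwasser c.1 c.2 = none <;> simp [h]
    have sumM : (T.filter (fun c => goldwasser c.1 c.2 = none)).card
        ≤ ∑ σ : Fin 6, (M σ).card := by
      have h1 : ∑ σ : Fin 6, (E σ).card ≤ ∑ σ : Fin 6, 2 * (M σ).card :=
        Finset.sum_le_sum (fun σ _ => hMcard σ)
      rw [sumE, ← Finset.mul_sum] at h1
      omega
    have split := Finset.card_filter_add_card_filter_not
      (s := T) (p := fun c => goldwasser c.1 c.2 = none)
    have hfinal : ∑ σ : Fin 6, ((F σ).card + (M σ).card) ≤ ∑ σ : Fin 6, alpha goldwasser σ T :=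
      Finset.sum_le_sum (fun σ _ => key σ)
    rw [Finset.sum_add_distrib, sumF] at hfinal
    omega
  · rintro ⟨L, ⟨hrow, hcol⟩, hAgree⟩
    have rowblock : ∀ i j j' σ, goldwasser i j = none → goldwasser i j' = some σ → L i j ≠ σ := by
      intro i j j' σ hn hs he
      have h2 : L i j' = σ := hAgree _ _ _ hs
      have hj : j = j' := hrow i (he.trans h2.symm)
      rw [hj, hs] at hn; exact Option.some_ne_none _ hn
    have colblock : ∀ i i' j σ, goldwasser i j = none → goldwasser i' j = some σ → L i j ≠ σ := by
      intro i i' j σ hn hs he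
      have h2 : L i' j = σ := hAgree _ _ _ hs
      have hi : i = i' := hcol j (show L i j = L i' j from he.trans h2.symm)
      rw [hi, hs] at hn; exact Option.some_ne_none _ hn
    have rowne : ∀ (i j j' : Fin 6), j ≠ j' → L i j ≠ L i j' :=
      fun i j j' h he => h (hrow i he)
    have colne : ∀ (i i' j : Fin 6), i ≠ i' → L i j ≠ L i' j :=
      fun i i' j h he => h (hcol j he)
    have h32 : L 3 2 = 3 ∨ L 3 2 = 5 := by
      have n1 := rowblock 3 2 0 1 (by decide) (by decide)
      have n2 := rowblock 3 2 1 4 (by decide) (by decide)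
      have n3 := colblock 3 0 2 2 (by decide) (by decide)
      have n4 := colblock 3 1 2 0 (by decide) (by decide)
      revert n1 n2 n3 n4; generalize L 3 2 = v; revert v; decide
    have h33 : L 3 3 = 0 ∨ L 3 3 = 2 := by
      have n1 := rowblock 3 3 0 1 (by decide) (by decide)
      have n2 := rowblock 3 3 1 4 (by decide) (by decide)
      have n3 := colblock 3 0 3 3 (by decide) (by decide)
      have n4 := colblock 3 2 3 5 (by decide) (by decide)
      revert n1 n2 n3 n4; generalize L 3 3 = v; revert v; decide
    have h34 : L 3 4 = 0 ∨ L 3 4 = 5 := by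
      have n1 := rowblock 3 4 0 1 (by decide) (by decide)
      have n2 := rowblock 3 4 1 4 (by decide) (by decide)
      have n3 := colblock 3 1 4 3 (by decide) (by decide)
      have n4 := colblock 3 2 4 2 (by decide) (by decide)
      revert n1 n2 n3 n4; generalize L 3 4 = v; revert v; decide
    have h35 : L 3 5 = 2 ∨ L 3 5 = 3 := by
      have n1 := rowblock 3 5 0 1 (by decide) (by decide)
      have n2 := rowblock 3 5 1 4 (by decide) (by decide)
      have n3 := colblock 3 0 5 5 (by decide) (by decide)
      have n4 := colblock 3 2 5 0 (by decide) (by decide)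
      revert n1 n2 n3 n4; generalize L 3 5 = v; revert v; decide
    have h42 : L 4 2 = 4 ∨ L 4 2 = 5 := by
      have n1 := rowblock 4 2 0 3 (by decide) (by decide)
      have n2 := rowblock 4 2 1 0 (by decide) (by decide)
      have n3 := colblock 4 0 2 2 (by decide) (by decide)
      have n4 := colblock 4 2 2 1 (by decide) (by decide)
      revert n1 n2 n3 n4; generalize L 4 2 = v; revert v; decide
    have h43 : L 4 3 = 2 ∨ L 4 3 = 4 := by
      have n1 := rowblock 4 3 0 3 (by decide) (by decide)
      have n2 := rowblock 4 3 1 0 (by decide) (by decide)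
      have n3 := colblock 4 1 3 1 (by decide) (by decide)
      have n4 := colblock 4 2 3 5 (by decide) (by decide)
      revert n1 n2 n3 n4; generalize L 4 3 = v; revert v; decide
    have h44 : L 4 4 = 1 ∨ L 4 4 = 5 := by
      have n1 := rowblock 4 4 0 3 (by decide) (by decide)
      have n2 := rowblock 4 4 1 0 (by decide) (by decide)
      have n3 := colblock 4 0 4 4 (by decide) (by decide)
      have n4 := colblock 4 2 4 2 (by decide) (by decide)
      revert n1 n2 n3 n4; generalize L 4 4 = v; revert v; decide
    have h45 : L 4 5 = 1 ∨ L 4 5 = 2 := by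
      have n1 := rowblock 4 5 0 3 (by decide) (by decide)
      have n2 := rowblock 4 5 1 0 (by decide) (by decide)
      have n3 := colblock 4 0 5 5 (by decide) (by decide)
      have n4 := colblock 4 1 5 4 (by decide) (by decide)
      revert n1 n2 n3 n4; generalize L 4 5 = v; revert v; decide
    have h52 : L 5 2 = 3 ∨ L 5 2 = 4 := by
      have n1 := rowblock 5 2 0 5 (by decide) (by decide)
      have n2 := rowblock 5 2 1 2 (by decide) (by decide)
      have n3 := colblock 5 1 2 0 (by decide) (by decide)
      have n4 := colblock 5 2 2 1 (by decide) (by decide)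
      revert n1 n2 n3 n4; generalize L 5 2 = v; revert v; decide
    rcases h32 with ha | ha
    · rcases h35 with hd | hd
      · rcases h42 with he | he
        · rcases h52 with hp | hp
          · exact colne 3 5 2 (by decide) (ha.trans hp.symm)
          · exact colne 4 5 2 (by decide) (he.trans hp.symm)
        · rcases h44 with hg | hg
          · rcases h45 with hh | hh
            · exact rowne 4 4 5 (by decide) (hg.trans hh.symm)
            · exact colne 3 4 5 (by decide) (hd.trans hh.symm)
          · exact rowne 4 2 4 (by decide) (he.trans hg.symm)
      · exact rowne 3 2 5 (by decide) (ha.trans hd.symm)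
    · rcases h34 with hc | hc
      · rcases h33 with hb | hb
        · exact rowne 3 3 4 (by decide) (hb.trans hc.symm)
        · rcases h42 with he | he
          · rcases h43 with hf | hf
            · exact colne 3 4 3 (by decide) (hb.trans hf.symm)
            · exact rowne 4 2 3 (by decide) (he.trans hf.symm)
          · exact colne 3 4 2 (by decide) (ha.trans he.symm)
      · exact rowne 3 2 4 (by decide) (ha.trans hc.symm)
end

section
/- Let G be a bipartite graph with bipartition (A,B) and let M₁ and M₂ be matchings in G. Then there exists a matching M ⊆ M₁ ∪ M₂ such that M covers every vertex of A covered by M₁ and every vertex of B covered by M₂. -/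
open scoped Classical

section DMaux

variable {V : Type*}

/-- Alternating reachability: starting from `a`, alternate `Adj1`- and `Adj2`-steps.
`false` means the next step should be an `Adj1` step. -/
inductive AltReach (Adj1 Adj2 : V → V → Prop) (a : V) : Bool → V → Prop
  | base : AltReach Adj1 Adj2 a false a
  | step1 {x y : V} : AltReach Adj1 Adj2 a false x → Adj1 x y → AltReach Adj1 Adj2 a true y
  | step2 {x y : V} : AltReach Adj1 Adj2 a true x → Adj2 x y → AltReach Adj1 Adj2 a false y

lemma altReach_closure {Adj1 Adj2 : V → V → Prop} {a : V}
    (symm1 : ∀ {x y}, Adj1 x y → Adj1 y x) (symm2 : ∀ {x y}, Adj2 x y → Adj2 y x)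
    (uniq1 : ∀ {x y z}, Adj1 x y → Adj1 x z → y = z)
    (uniq2 : ∀ {x y z}, Adj2 x y → Adj2 x z → y = z)
    (ha : ∀ y, ¬ Adj2 a y) :
    ∀ {s x}, AltReach Adj1 Adj2 a s x →
      ∀ {y}, Adj1 x y ∨ Adj2 x y → ∃ t, AltReach Adj1 Adj2 a t y := by
  intro s x h
  induction h with
  | base =>
    intro y hy
    rcases hy with h1 | h2
    · exact ⟨true, .step1 .base h1⟩
    · exact absurd h2 (ha _)
  | @step1 x₀ y₀ hx hxy _ =>
    intro y hy
    rcases hy with h1 | h2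
    · have : x₀ = y := uniq1 (symm1 hxy) h1
      exact this ▸ ⟨false, hx⟩
    · exact ⟨false, .step2 (.step1 hx hxy) h2⟩
  | @step2 x₀ y₀ hx hxy _ =>
    intro y hy
    rcases hy with h1 | h2
    · exact ⟨true, .step1 (.step2 hx hxy) h1⟩
    · have : x₀ = y := uniq2 (symm2 hxy) h2
      exact this ▸ ⟨true, hx⟩

lemma altReach_of_reach {Adj1 Adj2 : V → V → Prop} {a : V}
    (symm1 : ∀ {x y}, Adj1 x y → Adj1 y x) (symm2 : ∀ {x y}, Adj2 x y → Adj2 y x)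
    (uniq1 : ∀ {x y z}, Adj1 x y → Adj1 x z → y = z)
    (uniq2 : ∀ {x y z}, Adj2 x y → Adj2 x z → y = z)
    (ha : ∀ y, ¬ Adj2 a y) {b : V}
    (h : Relation.ReflTransGen (fun x y => Adj1 x y ∨ Adj2 x y) a b) :
    ∃ s, AltReach Adj1 Adj2 a s b := by
  induction h with
  | refl => exact ⟨false, .base⟩
  | tail _ hstep ih =>
    obtain ⟨s, hs⟩ := ih
    exact altReach_closure symm1 symm2 uniq1 uniq2 ha hs hstep

lemma altReach_side {Adj1 Adj2 : V → V → Prop} {a : V} {A : Set V}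
    (hside : ∀ {x y}, Adj1 x y ∨ Adj2 x y → (x ∈ A ↔ y ∉ A)) (haA : a ∈ A) :
    ∀ {s x}, AltReach Adj1 Adj2 a s x → (x ∈ A ↔ s = false) := by
  intro s x h
  induction h with
  | base => simp [haA]
  | @step1 x₀ y₀ _ hxy ih =>
    have hx : x₀ ∈ A := ih.mpr rfl
    have := (hside (Or.inl hxy)).mp hx
    simp [this]
  | @step2 x₀ y₀ _ hxy ih =>
    have hx : x₀ ∉ A := fun h' => by simpa using ih.mp h'
    have hy : y₀ ∈ A := by
      by_contra hy
      exact hx ((hside (Or.inr hxy)).mpr hy)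
    simp [hy]

end DMaux

theorem stmt11 {V : Type*} (G : SimpleGraph V) (A B : Set V)
    (hdisj : Disjoint A B) (hcover : A ∪ B = Set.univ)
    (hbip : ∀ u v, G.Adj u v → (u ∈ A ∧ v ∈ B) ∨ (u ∈ B ∧ v ∈ A))
    (M₁ M₂ : G.Subgraph) (h₁ : M₁.IsMatching) (h₂ : M₂.IsMatching) :
    ∃ M : G.Subgraph, M.IsMatching ∧ M.edgeSet ⊆ M₁.edgeSet ∪ M₂.edgeSet ∧
      (∀ a ∈ A, a ∈ M₁.support → a ∈ M.support) ∧
      (∀ b ∈ B, b ∈ M₂.support → b ∈ M.support) := by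
  classical
  have uniq1 : ∀ {x y z : V}, M₁.Adj x y → M₁.Adj x z → y = z := by
    intro x y z hxy hxz
    exact (h₁ (M₁.edge_vert hxy)).unique hxy hxz
  have uniq2 : ∀ {x y z : V}, M₂.Adj x y → M₂.Adj x z → y = z := by
    intro x y z hxy hxz
    exact (h₂ (M₂.edge_vert hxy)).unique hxy hxz
  have symm1 : ∀ {x y : V}, M₁.Adj x y → M₁.Adj y x := fun h => h.symm
  have symm2 : ∀ {x y : V}, M₂.Adj x y → M₂.Adj y x := fun h => h.symm
  -- vertices not in A are in B and vice versa
  have hAB : ∀ x : V, x ∉ A ↔ x ∈ B := by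
    intro x
    constructor
    · intro hx
      have : x ∈ A ∪ B := hcover ▸ Set.mem_univ x
      rcases this with h | h
      · exact absurd h hx
      · exact h
    · intro hx hA
      exact hdisj.ne_of_mem hA hx rfl
  have hside : ∀ {x y : V}, M₁.Adj x y ∨ M₂.Adj x y → (x ∈ A ↔ y ∉ A) := by
    intro x y h
    have hG : G.Adj x y := by rcases h with h | h; exacts [M₁.adj_sub h, M₂.adj_sub h]
    rcases hbip x y hG with ⟨hx, hy⟩ | ⟨hx, hy⟩
    · constructor
      · intro _ hyA; exact hdisj.ne_of_mem hyA hy rfl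
      · intro _; exact hx
    · exact ⟨fun hxA => absurd rfl (hdisj.ne_of_mem hxA hx),
        fun hy' => absurd hy hy'⟩
  set UAdj : V → V → Prop := fun x y => M₁.Adj x y ∨ M₂.Adj x y with hUdef
  have hUsymm : ∀ {x y : V}, UAdj x y → UAdj y x := fun h => h.imp symm1 symm2
  set S : Set V := {v | ∃ a, a ∈ A ∧ a ∉ M₂.support ∧ Relation.ReflTransGen UAdj a v}
    with hSdef
  have hSc : ∀ {v w : V}, v ∈ S → UAdj v w → w ∈ S := by
    rintro v w ⟨a, h1, h2, h3⟩ h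
    exact ⟨a, h1, h2, h3.tail h⟩
  have hSc' : ∀ {v w : V}, w ∈ S → UAdj v w → v ∈ S := fun hw h => hSc hw (hUsymm h)
  refine ⟨{ verts := {v | (v ∈ S ∧ v ∈ M₁.support) ∨ (v ∉ S ∧ v ∈ M₂.support)},
            Adj := fun x y => (x ∈ S ∧ M₁.Adj x y) ∨ (x ∉ S ∧ M₂.Adj x y),
            adj_sub := ?_, edge_vert := ?_, symm := ?_ }, ?_, ?_, ?_, ?_⟩
  · rintro x y (⟨_, h⟩ | ⟨_, h⟩)
    exacts [M₁.adj_sub h, M₂.adj_sub h]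
  · rintro x y (⟨hS, h⟩ | ⟨hS, h⟩)
    · exact Or.inl ⟨hS, SimpleGraph.Subgraph.mem_support _ |>.mpr ⟨y, h⟩⟩
    · exact Or.inr ⟨hS, SimpleGraph.Subgraph.mem_support _ |>.mpr ⟨y, h⟩⟩
  · refine ⟨?_⟩; rintro x y (⟨hS, h⟩ | ⟨hS, h⟩)
    · exact Or.inl ⟨hSc hS (Or.inl h), h.symm⟩
    · refine Or.inr ⟨fun hyS => hS (hSc' hyS (Or.inr h)), h.symm⟩
  -- matching
  · rintro v (⟨hvS, hv1⟩ | ⟨hvS, hv2⟩)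
    · obtain ⟨w, hw⟩ := (SimpleGraph.Subgraph.mem_support _).mp hv1
      refine ⟨w, Or.inl ⟨hvS, hw⟩, ?_⟩
      rintro y (⟨_, hy⟩ | ⟨hvS', _⟩)
      · exact uniq1 hy hw
      · exact absurd hvS hvS'
    · obtain ⟨w, hw⟩ := (SimpleGraph.Subgraph.mem_support _).mp hv2
      refine ⟨w, Or.inr ⟨hvS, hw⟩, ?_⟩
      rintro y (⟨hvS', _⟩ | ⟨_, hy⟩)
      · exact absurd hvS' hvS
      · exact uniq2 hy hw
  -- edge set
  · intro e he
    induction e using Sym2.ind with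
    | _ x y =>
      rw [SimpleGraph.Subgraph.mem_edgeSet] at he
      rcases he with ⟨_, h⟩ | ⟨_, h⟩
      · exact Set.mem_union_left _ (SimpleGraph.Subgraph.mem_edgeSet.mpr h)
      · exact Set.mem_union_right _ (SimpleGraph.Subgraph.mem_edgeSet.mpr h)
  -- A vertices covered by M₁
  · intro a haA ha1
    by_cases haS : a ∈ S
    · obtain ⟨w, hw⟩ := (SimpleGraph.Subgraph.mem_support _).mp ha1
      exact (SimpleGraph.Subgraph.mem_support _).mpr ⟨w, Or.inl ⟨haS, hw⟩⟩
    · have ha2 : a ∈ M₂.support := by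
        by_contra h2
        exact haS ⟨a, haA, h2, Relation.ReflTransGen.refl⟩
      obtain ⟨w, hw⟩ := (SimpleGraph.Subgraph.mem_support _).mp ha2
      exact (SimpleGraph.Subgraph.mem_support _).mpr ⟨w, Or.inr ⟨haS, hw⟩⟩
  -- B vertices covered by M₂
  · intro b hbB hb2
    by_cases hbS : b ∈ S
    · obtain ⟨a, haA, ha2, hR⟩ := id hbS
      have hano : ∀ y, ¬ M₂.Adj a y := by
        intro y hy
        exact ha2 ((SimpleGraph.Subgraph.mem_support _).mpr ⟨y, hy⟩)
      obtain ⟨s, hs⟩ := altReach_of_reach symm1 symm2 uniq1 uniq2 hano hR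
      have hbA : b ∉ A := fun h => hdisj.ne_of_mem h hbB rfl
      have hside' := altReach_side (Adj1 := M₁.Adj) (Adj2 := M₂.Adj) hside haA hs
      have hst : s = true := by
        cases s with
        | false => exact absurd (hside'.mpr rfl) hbA
        | true => rfl
      subst hst
      have hb1 : b ∈ M₁.support := by
        cases hs with
        | step1 hx hxy => exact (SimpleGraph.Subgraph.mem_support _).mpr ⟨_, hxy.symm⟩
      obtain ⟨w, hw⟩ := (SimpleGraph.Subgraph.mem_support _).mp hb1
      exact (SimpleGraph.Subgraph.mem_support _).mpr ⟨w, Or.inl ⟨hbS, hw⟩⟩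
    · obtain ⟨w, hw⟩ := (SimpleGraph.Subgraph.mem_support _).mp hb2
      exact (SimpleGraph.Subgraph.mem_support _).mpr ⟨w, Or.inr ⟨hbS, hw⟩⟩
end

section
/- Let G be a directed graph with integer edge capacities, a source α with zero in-degree and a sink ω with zero out-degree, and suppose every cut separating α from ω has capacity at least u. Then there exists an integral flow from α to ω of value at least u. -/
open scoped Classical

section MF


variable {V : Type*} [Fintype V] [DecidableEq V]

/-- Unit flow along a list of vertices. -/
def pathFlow : List V → V → V → ℕ
  | a :: b :: t, x, y => (if x = a ∧ y = b then 1 else 0) + pathFlow (b :: t) x y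
  | _, _, _ => 0

lemma pathFlow_nil (x y : V) : pathFlow [] x y = 0 := rfl
lemma pathFlow_single (a x y : V) : pathFlow [a] x y = 0 := rfl
lemma pathFlow_cons (a b : V) (t : List V) (x y : V) :
    pathFlow (a :: b :: t) x y = (if x = a ∧ y = b then 1 else 0) + pathFlow (b :: t) x y := rfl

lemma pathFlow_out (L : List V) (hL : L.Nodup) (v : V) :
    ∑ y, pathFlow L v y = if v ∈ L.dropLast then 1 else 0 := by
  induction L with
  | nil => simp [pathFlow_nil]
  | cons a t ih =>
    cases t with
    | nil => simp [pathFlow_single]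
    | cons b t' =>
      have ha : a ∉ b :: t' := (List.nodup_cons.mp hL).1
      have hnd : (b :: t').Nodup := (List.nodup_cons.mp hL).2
      have hdl : a ∉ (b :: t').dropLast := fun h => ha ((List.dropLast_sublist _).mem h)
      simp only [pathFlow_cons, Finset.sum_add_distrib, ih hnd]
      have h1 : ∑ y, (if v = a ∧ y = b then 1 else 0) = if v = a then 1 else 0 := by
        by_cases hva : v = a <;> simp [hva]
      rw [h1]
      have : (a :: b :: t').dropLast = a :: (b :: t').dropLast := rfl
      rw [this]
      by_cases hva : v = a
      · subst hva; simp [hdl]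
      · simp [hva]

lemma pathFlow_in (L : List V) (hL : L.Nodup) (v : V) :
    ∑ x, pathFlow L x v = if v ∈ L.tail then 1 else 0 := by
  induction L with
  | nil => simp [pathFlow_nil]
  | cons a t ih =>
    cases t with
    | nil => simp [pathFlow_single]
    | cons b t' =>
      have hnd : (b :: t').Nodup := (List.nodup_cons.mp hL).2
      have hbt : b ∉ t' := (List.nodup_cons.mp hnd).1
      simp only [pathFlow_cons, Finset.sum_add_distrib, ih hnd]
      have h1 : ∑ x, (if x = a ∧ v = b then 1 else 0) = if v = b then 1 else 0 := by
        by_cases hvb : v = b <;> simp [hvb]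
      rw [h1]
      show _ = if v ∈ b :: t' then 1 else 0
      have : (b :: t').tail = t' := rfl
      rw [this]
      by_cases hvb : v = b
      · subst hvb; simp [hbt]
      · simp [hvb]

lemma pathFlow_edge {r : V → V → Prop} : ∀ (a : V) (l : List V), List.Chain r a l →
    ∀ x y, 1 ≤ pathFlow (a :: l) x y → r x y := by
  intro a l
  induction l generalizing a with
  | nil => intro _ x y h; simp [pathFlow_single] at h
  | cons b t ih =>
    intro hc x y h
    obtain ⟨hab, hc'⟩ := List.chain_cons.mp hc
    rw [pathFlow_cons] at h
    by_cases hxy : x = a ∧ y = b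
    · obtain ⟨hx, hy⟩ := hxy; subst hx; subst hy; exact hab
    · simp [hxy] at h; exact ih b hc' x y h

/-- Trim a chain to a duplicate-free chain with the same endpoints. -/
lemma trim_chain {r : V → V → Prop} : ∀ (N : ℕ) (l : List V) (a b : V), l.length ≤ N → a ≠ b →
    List.Chain r a (l ++ [b]) →
    ∃ l', List.Chain r a (l' ++ [b]) ∧ (a :: (l' ++ [b])).Nodup ∧ ∀ x ∈ l', x ∈ l := by
  intro N
  induction N with
  | zero =>
    intro l a b hlen hab hc
    have : l = [] := List.eq_nil_of_length_eq_zero (Nat.le_zero.mp hlen)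
    subst this
    refine ⟨[], hc, ?_, by simp⟩
    simp [hab]
  | succ N ih =>
    intro l a b hlen hab hc
    by_cases hal : a ∈ l
    · obtain ⟨l1, l2, rfl⟩ := List.append_of_mem hal
      have hsplit : List.Chain r a (l1 ++ a :: (l2 ++ [b])) := by
        simpa using hc
      have hc2 : List.Chain r a (l2 ++ [b]) := (List.isChain_cons_split.mp hsplit).2
      have hlen2 : l2.length ≤ N := by
        have := hlen; simp [List.length_append] at this; omega
      obtain ⟨l', h1, h2, h3⟩ := ih l2 a b hlen2 hab hc2
      exact ⟨l', h1, h2, fun x hx => by simp [h3 x hx]⟩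
    · cases l with
      | nil =>
        refine ⟨[], hc, ?_, by simp⟩
        simp [hab]
      | cons e t =>
        by_cases heb : e = b
        · have hrae : r a e := (List.chain_cons.mp hc).1
          have hrab : r a b := heb ▸ hrae
          refine ⟨[], ?_, ?_, by simp⟩
          · simpa using List.Chain.cons hrab List.Chain.nil
          · simp [hab]
        · obtain ⟨hae, hc'⟩ := List.chain_cons.mp hc
          have hlen' : t.length ≤ N := by simp at hlen; omega
          obtain ⟨t', h1, h2, h3⟩ := ih t e b hlen' heb hc'
          have hane : a ≠ e := fun h => hal (h ▸ (List.mem_cons_self : e ∈ e :: t))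
          have hant : a ∉ t' := fun h => hal (List.mem_cons_of_mem _ (h3 a h))
          refine ⟨e :: t', List.chain_cons.mpr ⟨hae, h1⟩, ?_, ?_⟩
          · rw [List.nodup_cons]
            refine ⟨?_, h2⟩
            intro hmem
            simp only [List.cons_append, List.mem_cons, List.mem_append,
              List.mem_singleton] at hmem
            rcases hmem with h | h | h
            exacts [hane h, hant h, by rcases h with h | h; exacts [hab h, absurd h List.not_mem_nil]]
          · intro x hx
            rcases List.mem_cons.mp hx with h | h
            · simp [h]
            · exact List.mem_cons_of_mem _ (h3 x h)


lemma maxflow_aux (α ω : V) (hαω : α ≠ ω) : ∀ (u : ℕ) (c : V → V → ℕ),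
    (∀ v, c v α = 0) → (∀ v, c ω v = 0) →
    (∀ S : Finset V, α ∈ S → ω ∉ S → u ≤ ∑ x ∈ S, ∑ y ∈ Sᶜ, c x y) →
    ∃ f : V → V → ℕ, (∀ x y, f x y ≤ c x y) ∧
      (∀ v, v ≠ α → v ≠ ω → ∑ x, f x v = ∑ y, f v y) ∧
      u ≤ ∑ y, f α y := by
  intro u
  induction u with
  | zero =>
    intro c _ _ _
    exact ⟨fun _ _ => 0, fun _ _ => Nat.zero_le _, fun _ _ _ => rfl, Nat.zero_le _⟩
  | succ u ih =>
    intro c hin hout hcut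
    set r : V → V → Prop := fun x y => 1 ≤ c x y with hr
    have hreach : Relation.ReflTransGen r α ω := by
      by_contra hnr
      set S : Finset V := Finset.univ.filter (fun v => Relation.ReflTransGen r α v) with hS
      have hαS : α ∈ S := by simp [hS]; exact Relation.ReflTransGen.refl
      have hωS : ω ∉ S := by simp [hS]; exact hnr
      have hzero : ∑ x ∈ S, ∑ y ∈ Sᶜ, c x y = 0 := by
        apply Finset.sum_eq_zero; intro x hx
        apply Finset.sum_eq_zero; intro y hy
        by_contra hc0
        have hrxy : r x y := Nat.one_le_iff_ne_zero.mpr hc0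
        have hx' : Relation.ReflTransGen r α x := by simp [hS] at hx; exact hx
        have hyS : y ∈ S := by simp [hS]; exact hx'.tail hrxy
        rw [Finset.mem_compl] at hy; exact hy hyS
      have hge := hcut S hαS hωS
      rw [hzero] at hge; omega
    obtain ⟨l0, hc0, hlast⟩ := List.exists_isChain_cons_of_relationReflTransGen hreach
    have hl0ne : l0 ≠ [] := by
      intro h; subst h; simp at hlast; exact hαω hlast
    have hchain1 : List.Chain r α (l0.dropLast ++ [ω]) := by
      have h2 : l0.getLast hl0ne = ω := by
        rw [← hlast]; exact (List.getLast_cons hl0ne).symm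
      have h1 : l0.dropLast ++ [ω] = l0 := by
        rw [← h2]; exact List.dropLast_append_getLast hl0ne
      rw [h1]; exact hc0
    obtain ⟨l, hchain, hnd, -⟩ :=
      trim_chain l0.dropLast.length l0.dropLast α ω le_rfl hαω hchain1
    set L : List V := α :: (l ++ [ω]) with hL
    set p : V → V → ℕ := pathFlow L with hp
    have hndL : L.Nodup := hnd
    have hLconcat : L = (α :: l) ++ [ω] := by simp [hL]
    have hdropLast : L.dropLast = α :: l := by rw [hLconcat]; exact List.dropLast_concat ..
    have htail : L.tail = l ++ [ω] := rfl
    have hαtail : α ∉ l ++ [ω] := (List.nodup_cons.mp hndL).1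
    have hωdrop : ω ∉ α :: l := by
      have h2 : ((α :: l) ++ [ω]).Nodup := by rw [← hLconcat]; exact hndL
      have hdisj := (List.nodup_append.mp h2).2.2
      intro hmem; exact hdisj ω hmem ω (List.mem_singleton_self ω) rfl
    have pout : ∀ v, ∑ y, p v y = if v ∈ α :: l then 1 else 0 := by
      intro v; rw [hp, pathFlow_out L hndL, hdropLast]
    have pin : ∀ v, ∑ x, p x v = if v ∈ l ++ [ω] then 1 else 0 := by
      intro v; rw [hp, pathFlow_in L hndL, htail]
    have p6 : ∑ y, p α y = 1 := by rw [pout]; simp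
    have p7 : ∑ x, p x α = 0 := by rw [pin]; simp [hαtail]
    have p3 : ∀ v, p v α = 0 := fun v =>
      (Finset.sum_eq_zero_iff.mp p7) v (Finset.mem_univ v)
    have p8 : ∑ y, p ω y = 0 := by rw [pout]; simp [hωdrop]
    have p4 : ∀ v, p ω v = 0 := fun v =>
      (Finset.sum_eq_zero_iff.mp p8) v (Finset.mem_univ v)
    have p5 : ∀ v, v ≠ α → v ≠ ω → ∑ x, p x v = ∑ y, p v y := by
      intro v hvα hvω
      rw [pin, pout]
      by_cases hvl : v ∈ l
      · rw [if_pos (by simp [hvl]), if_pos (by simp [hvl])]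
      · rw [if_neg (by simp [List.mem_append, hvl, hvω]),
            if_neg (by simp [List.mem_cons, hvα, hvl])]
    have p1 : ∀ x y, p x y ≤ 1 := by
      intro x y
      calc p x y ≤ ∑ y', p x y' :=
            Finset.single_le_sum (fun _ _ => Nat.zero_le _) (Finset.mem_univ y)
        _ ≤ 1 := by rw [pout]; split <;> omega
    have p2 : ∀ x y, 1 ≤ p x y → 1 ≤ c x y := fun x y h =>
      pathFlow_edge α (l ++ [ω]) hchain x y h
    have ple : ∀ x y, p x y ≤ c x y := by
      intro x y
      rcases Nat.eq_zero_or_pos (p x y) with h | h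
      · omega
      · have h2 := p2 x y h; have h1 := p1 x y; omega
    have crossing : ∀ S : Finset V, α ∈ S → ω ∉ S →
        ∑ x ∈ S, ∑ y ∈ Sᶜ, p x y = ∑ x ∈ S, ∑ y ∈ Sᶜ, p y x + 1 := by
      intro S hαS hωS
      have E1 : ∑ x ∈ S, ∑ y ∈ Sᶜ, p x y + ∑ x ∈ S, ∑ y ∈ S, p x y
          = ∑ x ∈ S, ∑ y, p x y := by
        rw [← Finset.sum_add_distrib]
        refine Finset.sum_congr rfl fun x _ => ?_
        rw [add_comm]; exact Finset.sum_add_sum_compl S _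
      have E2 : ∑ x ∈ S, ∑ y ∈ Sᶜ, p y x + ∑ x ∈ S, ∑ y ∈ S, p y x
          = ∑ x ∈ S, ∑ y, p y x := by
        rw [← Finset.sum_add_distrib]
        refine Finset.sum_congr rfl fun x _ => ?_
        rw [add_comm]; exact Finset.sum_add_sum_compl S _
      have Ecomm : ∑ x ∈ S, ∑ y ∈ S, p x y = ∑ x ∈ S, ∑ y ∈ S, p y x := Finset.sum_comm
      have Eout : ∑ x ∈ S, ∑ y, p x y = ∑ x ∈ S, ∑ y, p y x + 1 := by
        rw [← Finset.add_sum_erase S (fun x => ∑ y, p x y) hαS,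
            ← Finset.add_sum_erase S (fun x => ∑ y, p y x) hαS]
        have hcg : ∑ v ∈ S.erase α, ∑ y, p v y = ∑ v ∈ S.erase α, ∑ y, p y v := by
          refine Finset.sum_congr rfl fun v hv => ?_
          have hvα : v ≠ α := (Finset.mem_erase.mp hv).1
          have hvω : v ≠ ω := fun h => hωS (h ▸ (Finset.mem_erase.mp hv).2)
          exact (p5 v hvα hvω).symm
        rw [hcg, p6, p7]
        omega
      omega
    set c' : V → V → ℕ :=
      fun x y => c x y - p x y + (if y = α ∨ x = ω then 0 else p y x) with hc'
    have hin' : ∀ v, c' v α = 0 := by intro v; simp [hc', hin v]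
    have hout' : ∀ v, c' ω v = 0 := by intro v; simp [hc', hout v]
    have hcut' : ∀ S : Finset V, α ∈ S → ω ∉ S → u ≤ ∑ x ∈ S, ∑ y ∈ Sᶜ, c' x y := by
      intro S hαS hωS
      have hval : ∀ x ∈ S, ∀ y ∈ Sᶜ, c' x y = c x y - p x y + p y x := by
        intro x hx y hy
        have hyα : y ≠ α := fun h => (Finset.mem_compl.mp hy) (h ▸ hαS)
        have hxω : x ≠ ω := fun h => hωS (h ▸ hx)
        simp [hc', hyα, hxω]
      have key : ∑ x ∈ S, ∑ y ∈ Sᶜ, c' x y + ∑ x ∈ S, ∑ y ∈ Sᶜ, p x y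
          = ∑ x ∈ S, ∑ y ∈ Sᶜ, c x y + ∑ x ∈ S, ∑ y ∈ Sᶜ, p y x := by
        rw [← Finset.sum_add_distrib, ← Finset.sum_add_distrib]
        refine Finset.sum_congr rfl fun x hx => ?_
        rw [← Finset.sum_add_distrib, ← Finset.sum_add_distrib]
        refine Finset.sum_congr rfl fun y hy => ?_
        have h1 := hval x hx y hy
        have h2 := ple x y
        omega
      have hcr := crossing S hαS hωS
      have hge := hcut S hαS hωS
      omega
    obtain ⟨f', hf'le, hf'cons, hf'val⟩ := ih c' hin' hout' hcut'
    have hf'α : ∀ y, f' y α = 0 := by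
      intro y; have := hf'le y α; rw [hin' y] at this; omega
    set g : V → V → ℕ := fun x y => f' x y + p x y with hg
    set f : V → V → ℕ := fun x y => g x y - min (g x y) (g y x) with hf
    refine ⟨f, ?_, ?_, ?_⟩
    · intro x y
      by_cases hyα : y = α
      · have hz : g x y = 0 := by rw [hyα]; simp [hg, hf'α x, p3 x]
        show g x y - min (g x y) (g y x) ≤ c x y
        rw [hz]; simp
      · by_cases hxω : x = ω
        · subst hxω
          have hf0 : f' x y = 0 := by
            have := hf'le x y; rw [hout' y] at this; omega
          have hz : g x y = 0 := by simp [hg, hf0, p4 y]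
          show g x y - min (g x y) (g y x) ≤ c x y
          rw [hz]; simp
        · have h1 : f' x y ≤ c' x y := hf'le x y
          have h2 : c' x y = c x y - p x y + p y x := by simp [hc', hyα, hxω]
          rw [h2] at h1
          have h3 := ple x y
          have h4 := p1 y x
          have h5 : p y x ≤ g y x := by simp [hg]
          have h6 : g x y = f' x y + p x y := rfl
          show g x y - min (g x y) (g y x) ≤ c x y
          rcases le_total (g x y) (g y x) with h | h
          · rw [min_eq_left h]; omega
          · rw [min_eq_right h]; omega
    · intro v hvα hvω
      have hgcons : ∑ x, g x v = ∑ y, g v y := by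
        simp only [hg, Finset.sum_add_distrib, hf'cons v hvα hvω, p5 v hvα hvω]
      have h3 : ∑ x, min (g x v) (g v x) = ∑ y, min (g v y) (g y v) :=
        Finset.sum_congr rfl fun x _ => min_comm _ _
      simp only [hf]
      rw [Finset.sum_tsub_distrib _ (fun x _ => min_le_left _ _),
          Finset.sum_tsub_distrib _ (fun y _ => min_le_left _ _), hgcons, h3]
    · have hgy : ∀ y, g y α = 0 := by
        intro y; simp [hg, hf'α y, p3 y]
      have hfg : ∀ y, f α y = g α y := by
        intro y; simp [hf, hgy y]
      rw [Finset.sum_congr rfl fun y _ => hfg y]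
      have hsum : ∑ y, g α y = ∑ y, f' α y + ∑ y, p α y := by
        simp [hg, Finset.sum_add_distrib]
      rw [hsum, p6]; omega


end MF

theorem stmt19 {V : Type*} [Fintype V] [DecidableEq V]
    (c : V → V → ℕ) (α ω : V) (hαω : α ≠ ω)
    (hin : ∀ v, c v α = 0) (hout : ∀ v, c ω v = 0) (u : ℕ)
    (hcut : ∀ S : Finset V, α ∈ S → ω ∉ S → u ≤ ∑ x ∈ S, ∑ y ∈ Sᶜ, c x y) :
    ∃ f : V → V → ℕ, (∀ x y, f x y ≤ c x y) ∧
      (∀ v, v ≠ α → v ≠ ω → ∑ x, f x v = ∑ y, f v y) ∧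
      u ≤ ∑ y, f α y := maxflow_aux α ω hαω u c hin hout hcut
end
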